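/- arXiv:2207.07470 — 3 statements merged into one kernel-verified Lean document; each statement's English description precedes it below -/
import Mathlib

section
/- Let g : ℝᵐ → ℝ ∪ {∞} be a polyhedral function and (z̄, λ̄) ∈ gph ∂g with λ̄ ∈ ri ∂g(z̄). Then the paratingent cone to gph ∂g at (z̄, λ̄), the Clarke (regular) tangent cone, and the ordinary tangent cone all coincide and equal K × K^⊥, where K = K_g(z̄, λ̄) is the (linear subspace) critical cone; in particular ∂g is strictly proto-differentiable at z̄ for λ̄. -/
open Filter Topology Set Metric

noncomputable section

/-- A polyhedral convex set: a finite intersection of closed half-spaces. -/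
def IsPolyhedralSet {E : Type*} [AddCommGroup E] [Module ℝ E] (C : Set E) : Prop :=
  ∃ (s : ℕ) (b : Fin s → (E →ₗ[ℝ] ℝ)) (β : Fin s → ℝ), C = {x | ∀ i, b i x ≤ β i}

/-- A polyhedral function: proper (never `⊥`, somewhere finite) with polyhedral epigraph. -/
def IsPolyhedralFn {E : Type*} [AddCommGroup E] [Module ℝ E] (g : E → EReal) : Prop :=
  (∃ z, g z ≠ ⊤) ∧ (∀ z, g z ≠ ⊥) ∧
    IsPolyhedralSet {p : E × ℝ | g p.1 ≤ (p.2 : EReal)}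

/-- Tangent cone to a convex set: closure of the cone of feasible directions. -/
def tcone {E : Type*} [NormedAddCommGroup E] [NormedSpace ℝ E] (C : Set E) (x : E) : Set E :=
  closure {w | ∃ t : ℝ, 0 < t ∧ x + t • w ∈ C}

/-- Convex subdifferential of an extended-real-valued function. -/
def subdiff {E : Type*} [NormedAddCommGroup E] [InnerProductSpace ℝ E]
    (g : E → EReal) (z : E) : Set E :=
  {v | ∀ x, g z + ((inner ℝ v (x - z) : ℝ) : EReal) ≤ g x}

/-- Subderivative: `dg(z)(w) = liminf_{t↓0, w'→w} (g(z+tw')-g(z))/t`. -/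
def subderiv {E : Type*} [NormedAddCommGroup E] [NormedSpace ℝ E]
    (g : E → EReal) (z : E) (w : E) : EReal :=
  Filter.liminf (fun p : ℝ × E => (g (z + p.1 • p.2) - g z) * (((p.1)⁻¹ : ℝ) : EReal))
    ((nhdsWithin 0 (Set.Ioi (0 : ℝ))) ×ˢ 𝓝 w)

/-- Critical cone `K_g(z,v) = {w | dg(z)(w) = ⟨v,w⟩}`. -/
def Kcone {E : Type*} [NormedAddCommGroup E] [InnerProductSpace ℝ E]
    (g : E → EReal) (z v : E) : Set E :=
  {w | subderiv g z w = ((inner ℝ v w : ℝ) : EReal)}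

/-- Normal cone of convex analysis. -/
def ncone {E : Type*} [NormedAddCommGroup E] [InnerProductSpace ℝ E]
    (C : Set E) (x : E) : Set E :=
  {v | ∀ y ∈ C, (inner ℝ v (y - x) : ℝ) ≤ 0}

/-- A set is a linear subspace. -/
def IsLinSubspace {E : Type*} [AddCommGroup E] [Module ℝ E] (K : Set E) : Prop :=
  ∃ S : Submodule ℝ E, K = ↑S

/-- Polar cone. -/
def polarCone {E : Type*} [NormedAddCommGroup E] [InnerProductSpace ℝ E] (K : Set E) : Set E :=
  {u | ∀ w ∈ K, (inner ℝ u w : ℝ) ≤ 0}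

/-- Fenchel conjugate. -/
def fconj {E : Type*} [NormedAddCommGroup E] [InnerProductSpace ℝ E]
    (g : E → EReal) (v : E) : EReal :=
  ⨆ z, ((inner ℝ v z : ℝ) : EReal) - g z

/-- Bouligand (contingent) tangent cone, via sequences. -/
def btcone {E : Type*} [NormedAddCommGroup E] [NormedSpace ℝ E] (Ω : Set E) (x : E) : Set E :=
  {w | ∃ (t : ℕ → ℝ) (v : ℕ → E), (∀ n, 0 < t n) ∧ Tendsto t atTop (𝓝 0) ∧
      Tendsto v atTop (𝓝 w) ∧ ∀ n, x + t n • v n ∈ Ω}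

/-- Clarke (regular) tangent cone, via sequences. -/
def clarkeT {E : Type*} [NormedAddCommGroup E] [NormedSpace ℝ E] (Ω : Set E) (xb : E) : Set E :=
  {w | ∀ (x : ℕ → E) (t : ℕ → ℝ), (∀ n, x n ∈ Ω) → Tendsto x atTop (𝓝 xb) →
      (∀ n, 0 < t n) → Tendsto t atTop (𝓝 0) →
      ∃ v : ℕ → E, Tendsto v atTop (𝓝 w) ∧ ∀ n, x n + t n • v n ∈ Ω}

/-- Paratingent cone, via sequences. -/
def paraT {E : Type*} [NormedAddCommGroup E] [NormedSpace ℝ E] (Ω : Set E) (xb : E) : Set E :=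
  {w | ∃ (x : ℕ → E) (t : ℕ → ℝ) (v : ℕ → E), (∀ n, x n ∈ Ω) ∧ Tendsto x atTop (𝓝 xb) ∧
      (∀ n, 0 < t n) ∧ Tendsto t atTop (𝓝 0) ∧ Tendsto v atTop (𝓝 w) ∧
      ∀ n, x n + t n • v n ∈ Ω}

local notation "⟪" x ", " y "⟫" => @inner ℝ _ _ x y

theorem cone_eqs {F : Type*} [NormedAddCommGroup F] [NormedSpace ℝ F]
    [FiniteDimensional ℝ F] {Ω : Set F} {xb : F} (S : Submodule ℝ F)
    {ε : ℝ} (hε : 0 < ε) (hxb : xb ∈ Ω)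
    (hloc : ∀ p : F, dist p xb < ε → (p ∈ Ω ↔ p - xb ∈ S)) :
    clarkeT Ω xb = ↑S ∧ btcone Ω xb = ↑S ∧ paraT Ω xb = ↑S := by
  have hSc : (S : Set F) ⊆ clarkeT Ω xb := by
    intro w hw x t hxΩ hx ht htt
    classical
    refine ⟨fun n => if ‖x n - xb‖ + t n * ‖w‖ < ε then w else 0, ?_, ?_⟩
    · have h1 : Tendsto (fun n => ‖x n - xb‖ + t n * ‖w‖) atTop (𝓝 (0 + 0 * ‖w‖)) := by
        exact ((tendsto_iff_norm_sub_tendsto_zero.1 hx)).add (htt.mul tendsto_const_nhds)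
      rw [show (0:ℝ) + 0 * ‖w‖ = 0 by ring] at h1
      have h2 : ∀ᶠ n in atTop, ‖x n - xb‖ + t n * ‖w‖ < ε :=
        h1.eventually (eventually_lt_nhds hε)
      refine tendsto_const_nhds.congr' ?_
      filter_upwards [h2] with n hn
      simp [hn]
    · intro n
      by_cases hn : ‖x n - xb‖ + t n * ‖w‖ < ε
      · simp only [hn, if_pos]
        have hx1 : x n - xb ∈ S := by
          refine (hloc _ ?_).1 (hxΩ n)
          rw [dist_eq_norm]
          nlinarith [norm_nonneg w, (ht n).le]
        refine (hloc _ ?_).2 ?_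
        · rw [dist_eq_norm]
          have he : x n + t n • w - xb = (x n - xb) + t n • w := by abel
          rw [he]
          calc ‖(x n - xb) + t n • w‖ = ‖(x n - xb) + t n • w‖ := rfl
            _ ≤ ‖x n - xb‖ + ‖t n • w‖ := norm_add_le _ _
            _ = ‖x n - xb‖ + t n * ‖w‖ := by rw [norm_smul, Real.norm_of_nonneg (ht n).le]
            _ < ε := hn
        · have : x n + t n • w - xb = (x n - xb) + t n • w := by abel
          rw [this]
          exact S.add_mem hx1 (S.smul_mem _ hw)
      · simp only [hn, if_neg, not_false_iff, smul_zero, add_zero]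
        exact hxΩ n
  have hcb : clarkeT Ω xb ⊆ btcone Ω xb := by
    intro w hw
    obtain ⟨v, hv, hm⟩ := hw (fun _ => xb) (fun n => 1 / (n + 1)) (fun _ => hxb)
      tendsto_const_nhds (fun n => by positivity) tendsto_one_div_add_atTop_nhds_zero_nat
    exact ⟨_, v, fun n => by positivity, tendsto_one_div_add_atTop_nhds_zero_nat, hv, hm⟩
  have hbp : btcone Ω xb ⊆ paraT Ω xb := by
    rintro w ⟨t, v, ht, htt, hv, hm⟩
    exact ⟨fun _ => xb, t, v, fun _ => hxb, tendsto_const_nhds, ht, htt, hv, hm⟩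
  have hpS : paraT Ω xb ⊆ (S : Set F) := by
    rintro w ⟨x, t, v, hxΩ, hx, ht, htt, hv, hm⟩
    have hclosed : IsClosed (S : Set F) := S.closed_of_finiteDimensional
    have h1 : Tendsto (fun n => x n + t n • v n) atTop (𝓝 xb) := by
      have := hx.add (htt.smul hv)
      simpa using this
    have h2 : ∀ᶠ n in atTop, v n ∈ (S : Set F) := by
      filter_upwards [Metric.tendsto_nhds.mp hx ε hε, Metric.tendsto_nhds.mp h1 ε hε] with n hn1 hn2
      have hs1 : x n - xb ∈ S := (hloc _ hn1).1 (hxΩ n)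
      have hs2 : x n + t n • v n - xb ∈ S := (hloc _ hn2).1 (hm n)
      have hs3 : t n • v n ∈ S := by
        have he : t n • v n = (x n + t n • v n - xb) - (x n - xb) := by abel
        rw [he]; exact S.sub_mem hs2 hs1
      have := S.smul_mem (t n)⁻¹ hs3
      rwa [inv_smul_smul₀ (ht n).ne'] at this
    exact hclosed.mem_of_tendsto hv h2
  refine ⟨subset_antisymm (hcb.trans (hbp.trans hpS)) hSc,
    subset_antisymm (hbp.trans hpS) (hSc.trans hcb),
    subset_antisymm hpS ((hSc.trans hcb).trans hbp)⟩

theorem ri_extend {E : Type*} [NormedAddCommGroup E] [NormedSpace ℝ E] {C : Set E} {lb y : E}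
    (h : lb ∈ intrinsicInterior ℝ C) (hy : y ∈ C) :
    ∃ t : ℝ, 0 < t ∧ lb + t • (lb - y) ∈ C := by
  obtain ⟨x, hx, hxe⟩ := h
  have hlbA : lb ∈ affineSpan ℝ C := by rw [← hxe]; exact x.2
  have hyA : y ∈ affineSpan ℝ C := subset_affineSpan ℝ C hy
  have hmem : ∀ t : ℝ, lb + t • (lb - y) ∈ affineSpan ℝ C := by
    intro t
    have := AffineSubspace.smul_vsub_vadd_mem (affineSpan ℝ C) t hlbA hyA hlbA
    simpa [vsub_eq_sub, vadd_eq_add, add_comm] using this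
  set f : ℝ → affineSpan ℝ C := fun t => ⟨lb + t • (lb - y), hmem t⟩ with hf
  have hfc : Continuous f := by
    apply Continuous.subtype_mk
    fun_prop
  have hf0 : f 0 = x := by
    apply Subtype.ext
    simp [hf, hxe]
  have hnhds : f ⁻¹' (interior ((↑) ⁻¹' C : Set (affineSpan ℝ C))) ∈ 𝓝 (0 : ℝ) := by
    apply hfc.continuousAt.preimage_mem_nhds
    rw [hf0]
    exact isOpen_interior.mem_nhds hx
  obtain ⟨δ, hδ, hball⟩ := Metric.mem_nhds_iff.1 hnhds
  refine ⟨δ / 2, by positivity, ?_⟩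
  have : f (δ / 2) ∈ interior ((↑) ⁻¹' C : Set (affineSpan ℝ C)) := by
    apply hball
    rw [Metric.mem_ball, Real.dist_eq, sub_zero, abs_of_pos (by positivity : (0:ℝ) < δ/2)]
    linarith
  have h2 : f (δ / 2) ∈ (Subtype.val ⁻¹' C : Set (affineSpan ℝ C)) := interior_subset this
  simpa [hf] using h2

theorem ri_ball {E : Type*} [NormedAddCommGroup E] [InnerProductSpace ℝ E] {C : Set E} {lb : E}
    (h : lb ∈ intrinsicInterior ℝ C) :
    ∃ ε > 0, ∀ u : E, u ∈ vectorSpan ℝ C → ‖u‖ < ε → lb + u ∈ C := by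
  obtain ⟨x, hx, hxe⟩ := h
  have hlbA : lb ∈ affineSpan ℝ C := by rw [← hxe]; exact x.2
  obtain ⟨ε, hε, hball⟩ := Metric.mem_nhds_iff.1 (isOpen_interior.mem_nhds hx)
  refine ⟨ε, hε, fun u hu hun => ?_⟩
  have hmem : lb + u ∈ affineSpan ℝ C := by
    have hd : u ∈ (affineSpan ℝ C).direction := by
      rw [direction_affineSpan]; exact hu
    have := AffineSubspace.vadd_mem_of_mem_direction hd hlbA
    simpa [vadd_eq_add, add_comm] using this
  have : (⟨lb + u, hmem⟩ : affineSpan ℝ C) ∈ Metric.ball x ε := by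
    rw [Metric.mem_ball, Subtype.dist_eq, hxe]
    simpa [dist_eq_norm] using hun
  have h2 : (⟨lb + u, hmem⟩ : affineSpan ℝ C) ∈ (Subtype.val ⁻¹' C : Set (affineSpan ℝ C)) :=
    interior_subset (hball this)
  simpa using h2

set_option maxHeartbeats 2000000 in
theorem main_local {m : ℕ} (g : EuclideanSpace ℝ (Fin m) → EReal) (hg : IsPolyhedralFn g)
    (zb lb : EuclideanSpace ℝ (Fin m)) (hl : lb ∈ subdiff g zb)
    (hri : lb ∈ intrinsicInterior ℝ (subdiff g zb)) :
    ∃ (S : Submodule ℝ (EuclideanSpace ℝ (Fin m))) (ε : ℝ), 0 < ε ∧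
      Kcone g zb lb = ↑S ∧
      ∀ z v : EuclideanSpace ℝ (Fin m), dist z zb < ε → dist v lb < ε →
        (v ∈ subdiff g z ↔ (z - zb ∈ S ∧ v - lb ∈ Sᗮ)) := by
  classical
  obtain ⟨⟨z0, hz0⟩, hbot, s, b, β, hepi⟩ := hg
  -- membership in epigraph
  have hmem : ∀ (x : EuclideanSpace ℝ (Fin m)) (r : ℝ), g x ≤ (r : EReal) ↔ ∀ i, b i (x, r) ≤ β i := by
    intro x r
    have := Set.ext_iff.1 hepi (x, r)
    simpa using this
  -- decompose b into a, c
  obtain ⟨a, c, hb⟩ : ∃ (a : Fin s → EuclideanSpace ℝ (Fin m) →ₗ[ℝ] ℝ) (c : Fin s → ℝ),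
      ∀ i (x : EuclideanSpace ℝ (Fin m)) (r : ℝ), b i (x, r) = a i x + r * c i := by
    refine ⟨fun i => (b i).comp (LinearMap.inl ℝ (EuclideanSpace ℝ (Fin m)) ℝ), fun i => b i (0, 1), fun i x r => ?_⟩
    have h1 : (x, r) = ((x, (0:ℝ)) : EuclideanSpace ℝ (Fin m) × ℝ) + r • ((0, (1:ℝ)) : EuclideanSpace ℝ (Fin m) × ℝ) := by
      simp [Prod.ext_iff]
    rw [h1, map_add, map_smul]
    simp [smul_eq_mul]
  -- g zb is finite
  have hgtop : ∀ z v, v ∈ subdiff g z → g z ≠ ⊤ := by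
    intro z v hv htop
    apply hz0
    have := hv z0
    rw [htop] at this
    rw [EReal.top_add_coe] at this
    exact top_le_iff.1 this
  obtain ⟨gz, hgz⟩ : ∃ r : ℝ, g zb = (r : EReal) :=
    ⟨(g zb).toReal, ((g zb).coe_toReal (hgtop zb lb hl) (hbot zb)).symm⟩
  -- all c i are nonpositive
  have c_nonpos : ∀ i, c i ≤ 0 := by
    intro i
    by_contra hci
    push_neg at hci
    have key : ∀ n : ℝ, 0 ≤ n → a i zb + (gz + n) * c i ≤ β i := by
      intro n hn
      have h1 : g zb ≤ ((gz + n : ℝ) : EReal) := by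
        rw [hgz]; exact_mod_cast by linarith
      have := (hmem zb (gz + n)).1 h1 i
      rwa [hb] at this
    have h2 := key ((|β i - a i zb - gz * c i| + 1) / c i) (by positivity)
    have h3 : (gz + (|β i - a i zb - gz * c i| + 1) / c i) * c i
        = gz * c i + (|β i - a i zb - gz * c i| + 1) := by
      field_simp
    rw [h3] at h2
    have h4 := le_abs_self (β i - a i zb - gz * c i)
    linarith
  -- index set of "lower" constraints
  set Iminus : Finset (Fin s) := Finset.univ.filter (fun i => c i < 0) with hIm
  have hImem : ∀ i, i ∈ Iminus ↔ c i < 0 := by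
    intro i; simp [hIm]
  -- affine pieces
  obtain ⟨φ, hφ⟩ : ∃ φ : Fin s → EuclideanSpace ℝ (Fin m) → ℝ,
      ∀ i x, φ i x = (a i x - β i) / (-(c i)) := ⟨_, fun _ _ => rfl⟩
  -- Riesz representatives
  obtain ⟨p, hp⟩ : ∃ p : Fin s → EuclideanSpace ℝ (Fin m),
      ∀ i (w : EuclideanSpace ℝ (Fin m)), ⟪p i, w⟫ = a i w / (-(c i)) := by
    refine ⟨fun i => (InnerProductSpace.toDual ℝ _).symm
      (LinearMap.toContinuousLinearMap ((-(c i))⁻¹ • a i)), fun i w => ?_⟩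
    rw [InnerProductSpace.toDual_symm_apply]
    simp [smul_eq_mul, div_eq_inv_mul]
  obtain ⟨q, hq⟩ : ∃ q : Fin s → EuclideanSpace ℝ (Fin m),
      ∀ i (w : EuclideanSpace ℝ (Fin m)), ⟪q i, w⟫ = a i w := by
    refine ⟨fun i => (InnerProductSpace.toDual ℝ _).symm
      (LinearMap.toContinuousLinearMap (a i)), fun i w => ?_⟩
    rw [InnerProductSpace.toDual_symm_apply]
    simp
  -- affine expansion of φ
  have hφadd : ∀ i, i ∈ Iminus → ∀ x (u : EuclideanSpace ℝ (Fin m)), φ i (x + u) = φ i x + ⟪p i, u⟫ := by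
    intro i hi x u
    rw [hφ, hφ, hp, map_add]
    ring
  -- main characterization of g ≤ r
  have hL2 : ∀ (x : EuclideanSpace ℝ (Fin m)) (r : ℝ),
      g x ≤ (r : EReal) ↔ ((∀ i, c i = 0 → a i x ≤ β i) ∧ ∀ i ∈ Iminus, φ i x ≤ r) := by
    intro x r
    rw [hmem]
    constructor
    · intro h
      constructor
      · intro i hci
        have := h i
        rw [hb, hci] at this
        linarith
      · intro i hi
        rw [hImem] at hi
        have := h i
        rw [hb] at this
        rw [hφ, div_le_iff₀ (by linarith : (0:ℝ) < -(c i))]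
        nlinarith
    · rintro ⟨h1, h2⟩ i
      rcases lt_or_eq_of_le (c_nonpos i) with hci | hci
      · have := h2 i ((hImem i).2 hci)
        rw [hφ, div_le_iff₀ (by linarith : (0:ℝ) < -(c i))] at this
        rw [hb]
        nlinarith
      · rw [hb, hci]
        have := h1 i hci
        linarith
  -- Iminus is nonempty
  have hIne : Iminus.Nonempty := by
    by_contra h
    rw [Finset.not_nonempty_iff_eq_empty] at h
    have h1 : g zb ≤ ((gz - 1 : ℝ) : EReal) := by
      rw [hL2]
      refine ⟨fun i hci => ?_, fun i hi => by simp [h] at hi⟩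
      have h2 : g zb ≤ (gz : EReal) := hgz.le
      exact ((hL2 zb gz).1 h2).1 i hci
    rw [hgz] at h1
    exact absurd (EReal.coe_le_coe_iff.1 h1) (by linarith)
  -- φ i is below g
  have hcases : ∀ x, g x = ⊤ ∨ ∃ ξ : ℝ, g x = (ξ : EReal) := by
    intro x
    rcases eq_or_ne (g x) ⊤ with h | h
    · exact Or.inl h
    · exact Or.inr ⟨(g x).toReal, ((g x).coe_toReal h (hbot x)).symm⟩
  have hphile : ∀ i, i ∈ Iminus → ∀ x, ((φ i x : ℝ) : EReal) ≤ g x := by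
    intro i hi x
    rcases hcases x with h | ⟨ξ, hξ⟩
    · rw [h]; exact le_top
    · rw [hξ]
      exact_mod_cast ((hL2 x ξ).1 hξ.le).2 i hi
  -- active sets
  set S0 : Finset (Fin s) := Finset.univ.filter (fun i => c i = 0 ∧ a i zb = β i) with hS0def
  have hS0mem : ∀ i, i ∈ S0 ↔ (c i = 0 ∧ a i zb = β i) := by intro i; simp [hS0def]
  set Act : EuclideanSpace ℝ (Fin m) → ℝ → Finset (Fin s) :=
    fun z γ => Iminus.filter (fun i => φ i z = γ) with hActdef
  have hActmem : ∀ z γ i, i ∈ Act z γ ↔ (i ∈ Iminus ∧ φ i z = γ) := by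
    intro z γ i; simp [hActdef]
  have hAct_ne : ∀ (z : EuclideanSpace ℝ (Fin m)) (γ : ℝ), g z = (γ : EReal) → (Act z γ).Nonempty := by
    intro z γ hγ
    have hz2 : ∀ i ∈ Iminus, φ i z ≤ γ := ((hL2 z γ).1 hγ.le).2
    have h2 : g z ≤ ((Iminus.sup' hIne (fun i => φ i z) : ℝ) : EReal) :=
      (hL2 z _).2 ⟨((hL2 z γ).1 hγ.le).1, fun i hi => Finset.le_sup' (fun j => φ j z) hi⟩
    rw [hγ] at h2
    have hγγ' : γ ≤ Iminus.sup' hIne (fun i => φ i z) := EReal.coe_le_coe_iff.1 h2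
    obtain ⟨i₀, hi₀, hsup⟩ := Finset.exists_mem_eq_sup' hIne (fun i => φ i z)
    exact ⟨i₀, (hActmem _ _ _).2 ⟨hi₀, le_antisymm (hz2 i₀ hi₀) (by rw [← hsup]; exact hγγ')⟩⟩
  -- eventual upper bound along rays
  have hupper : ∀ (z : EuclideanSpace ℝ (Fin m)) (γ : ℝ), g z = (γ : EReal) →
      ∀ (w : EuclideanSpace ℝ (Fin m)), (∀ i, c i = 0 → a i z = β i → a i w ≤ 0) →
      ∀ r : ℝ, (∀ i ∈ Act z γ, ⟪p i, w⟫ ≤ r) →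
      ∀ᶠ t in 𝓝[>] (0:ℝ), 0 < t ∧ g (z + t • w) ≤ ((γ + t * r : ℝ) : EReal) := by
    intro z γ hγ w hw r hr
    have hz1 : ∀ i, c i = 0 → a i z ≤ β i := ((hL2 z γ).1 hγ.le).1
    have hz2 : ∀ i ∈ Iminus, φ i z ≤ γ := ((hL2 z γ).1 hγ.le).2
    have hexp : ∀ (t : ℝ), ∀ i, a i (z + t • w) = a i z + t * a i w := by
      intro t i; rw [map_add, map_smul]; simp [smul_eq_mul]
    have hφexp : ∀ (t : ℝ), ∀ i ∈ Iminus, φ i (z + t • w) = φ i z + t * ⟪p i, w⟫ := by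
      intro t i hi
      rw [hφadd i hi, real_inner_smul_right]
    have hall : ∀ i : Fin s, ∀ᶠ t in 𝓝[>] (0:ℝ),
        (c i = 0 → a i (z + t • w) ≤ β i) ∧ (i ∈ Iminus → φ i (z + t • w) ≤ γ + t * r) := by
      intro i
      have hA : ∀ᶠ t in 𝓝[>] (0:ℝ), (c i = 0 → a i (z + t • w) ≤ β i) := by
        by_cases hc : c i = 0
        · by_cases he : a i z = β i
          · filter_upwards [self_mem_nhdsWithin] with t ht _
            rw [hexp, he]
            have h1 := hw i hc he
            rw [Set.mem_Ioi] at ht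
            nlinarith
          · have hlt : a i z < β i := lt_of_le_of_ne (hz1 i hc) he
            have hcont : Tendsto (fun t : ℝ => a i (z + t • w)) (𝓝 0) (𝓝 (a i z)) := by
              have hcc : Tendsto (fun t : ℝ => a i z + t * a i w) (𝓝 0) (𝓝 (a i z)) := by
                have hcc' : Continuous (fun t : ℝ => a i z + t * a i w) :=
                  continuous_const.add (continuous_id.mul continuous_const)
                simpa using hcc'.tendsto 0
              exact hcc.congr fun t => (hexp t i).symm
            have := (hcont.eventually (eventually_lt_nhds hlt)).filter_mono (nhdsWithin_le_nhds (s := Set.Ioi (0:ℝ)))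
            exact this.mono fun t h _ => h.le
        · filter_upwards [self_mem_nhdsWithin] with t _ hc'
          exact absurd hc' hc
      have hB : ∀ᶠ t in 𝓝[>] (0:ℝ), (i ∈ Iminus → φ i (z + t • w) ≤ γ + t * r) := by
        by_cases hi : i ∈ Iminus
        · by_cases hact : φ i z = γ
          · filter_upwards [self_mem_nhdsWithin] with t ht _
            rw [hφexp t i hi, hact]
            have h1 := hr i ((hActmem z γ i).2 ⟨hi, hact⟩)
            rw [Set.mem_Ioi] at ht
            nlinarith
          · have hlt : φ i z < γ := lt_of_le_of_ne (hz2 i hi) hact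
            have hcont : Tendsto (fun t : ℝ => φ i z + t * ⟪p i, w⟫ - (γ + t * r)) (𝓝 0)
                (𝓝 (φ i z - γ)) := by
              have hcc : Continuous (fun t : ℝ => φ i z + t * ⟪p i, w⟫ - (γ + t * r)) :=
                (continuous_const.add (continuous_id.mul continuous_const)).sub
                  (continuous_const.add (continuous_id.mul continuous_const))
              have := hcc.tendsto 0
              simpa using this
            have h2 : ∀ᶠ t in 𝓝 (0:ℝ), φ i z + t * ⟪p i, w⟫ - (γ + t * r) < 0 :=
              hcont.eventually (eventually_lt_nhds (by linarith))
            refine (h2.filter_mono (nhdsWithin_le_nhds (s := Set.Ioi (0:ℝ)))).mono fun t h _ => ?_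
            rw [hφexp t i hi]
            linarith
        · filter_upwards [self_mem_nhdsWithin] with t _ hi'
          exact absurd hi' hi
      exact hA.and hB
    filter_upwards [eventually_all.2 hall, self_mem_nhdsWithin] with t hct ht
    rw [Set.mem_Ioi] at ht
    exact ⟨ht, (hL2 _ _).2 ⟨fun i hc => (hct i).1 hc, fun i hi => (hct i).2 hi⟩⟩
  -- forward characterization
  have hchar : ∀ (z : EuclideanSpace ℝ (Fin m)) (γ : ℝ), g z = (γ : EReal) →
      ∀ v ∈ subdiff g z, ∀ (w : EuclideanSpace ℝ (Fin m)),
      (∀ i, c i = 0 → a i z = β i → a i w ≤ 0) →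
      ∀ r : ℝ, (∀ i ∈ Act z γ, ⟪p i, w⟫ ≤ r) → ⟪v, w⟫ ≤ r := by
    intro z γ hγ v hv w hw r hr
    obtain ⟨t, ht, hgt⟩ := (hupper z γ hγ w hw r hr).exists
    have hsub := hv (z + t • w)
    rw [hγ, add_sub_cancel_left, real_inner_smul_right] at hsub
    have h2 : ((γ + t * ⟪v, w⟫ : ℝ) : EReal) ≤ ((γ + t * r : ℝ) : EReal) := by
      calc ((γ + t * ⟪v, w⟫ : ℝ) : EReal) = (γ : EReal) + ((t * ⟪v, w⟫ : ℝ) : EReal) := by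
            rw [← EReal.coe_add]
        _ ≤ g (z + t • w) := hsub
        _ ≤ ((γ + t * r : ℝ) : EReal) := hgt
    have h3 := EReal.coe_le_coe_iff.1 h2
    nlinarith
  -- backward characterization at zb
  have hchar' : ∀ v : EuclideanSpace ℝ (Fin m),
      (∀ (w : EuclideanSpace ℝ (Fin m)), (∀ i ∈ S0, a i w ≤ 0) →
        ∀ r : ℝ, (∀ i ∈ Act zb gz, ⟪p i, w⟫ ≤ r) → ⟪v, w⟫ ≤ r) → v ∈ subdiff g zb := by
    intro v hv x
    rcases hcases x with h | ⟨ξ, hξ⟩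
    · rw [h]; exact le_top
    · have hx1 : ∀ i, c i = 0 → a i x ≤ β i := ((hL2 x ξ).1 hξ.le).1
      have hx2 : ∀ i ∈ Iminus, φ i x ≤ ξ := ((hL2 x ξ).1 hξ.le).2
      have key : ⟪v, x - zb⟫ ≤ ξ - gz := by
        refine hv (x - zb) (fun i hi => ?_) (ξ - gz) (fun i hi => ?_)
        · obtain ⟨hc, he⟩ := (hS0mem i).1 hi
          rw [map_sub, he]
          linarith [hx1 i hc]
        · obtain ⟨hi', hact⟩ := (hActmem zb gz i).1 hi
          have h5 : φ i x = φ i zb + ⟪p i, x - zb⟫ := by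
            have := hφadd i hi' zb (x - zb)
            rwa [add_sub_cancel] at this
          rw [hact] at h5
          have := hx2 i hi'
          linarith
      rw [hgz, hξ]
      calc (gz : EReal) + ((⟪v, x - zb⟫ : ℝ) : EReal) = ((gz + ⟪v, x - zb⟫ : ℝ) : EReal) := by
            rw [← EReal.coe_add]
        _ ≤ (ξ : EReal) := by exact_mod_cast by linarith
  -- membership facts
  have hlbP : ∀ (w : EuclideanSpace ℝ (Fin m)), (∀ i ∈ S0, a i w ≤ 0) →
      ∀ r : ℝ, (∀ i ∈ Act zb gz, ⟪p i, w⟫ ≤ r) → ⟪lb, w⟫ ≤ r :=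
    fun w hw r hr => hchar zb gz hgz lb hl w
      (fun i hc he => hw i ((hS0mem i).2 ⟨hc, he⟩)) r hr
  have hpiP : ∀ i ∈ Act zb gz, p i ∈ subdiff g zb :=
    fun i hi => hchar' _ (fun w _ r hr => hr i hi)
  have hqP : ∀ i ∈ S0, lb + q i ∈ subdiff g zb := by
    intro i hi
    apply hchar'
    intro w hw r hr
    have h1 : ⟪lb + q i, w⟫ = ⟪lb, w⟫ + a i w := by rw [inner_add_left, hq]
    have h2 := hlbP w hw r hr
    have h3 := hw i hi
    rw [h1]
    linarith
  -- maximality from relative interior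
  have hmax : ∀ (w : EuclideanSpace ℝ (Fin m)), (∀ i ∈ S0, a i w ≤ 0) →
      (∀ i ∈ Act zb gz, ⟪p i, w⟫ ≤ ⟪lb, w⟫) →
      ∀ y ∈ subdiff g zb, ⟪y, w⟫ = ⟪lb, w⟫ := by
    intro w hw1 hw2 y hy
    have hle : ∀ y' ∈ subdiff g zb, ⟪y', w⟫ ≤ ⟪lb, w⟫ := fun y' hy' =>
      hchar zb gz hgz y' hy' w (fun i hc he => hw1 i ((hS0mem i).2 ⟨hc, he⟩)) _ hw2
    obtain ⟨t, ht, hty⟩ := ri_extend hri hy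
    have h2 := hle _ hty
    have h3 : ⟪lb + t • (lb - y), w⟫ = ⟪lb, w⟫ + t * (⟪lb, w⟫ - ⟪y, w⟫) := by
      rw [inner_add_left, real_inner_smul_left, inner_sub_left]
    rw [h3] at h2
    have h4 := hle y hy
    nlinarith
  -- the critical cone as a submodule
  obtain ⟨SK, hSKmem⟩ : ∃ SK : Submodule ℝ (EuclideanSpace ℝ (Fin m)),
      ∀ w, w ∈ SK ↔ ((∀ i ∈ S0, a i w = 0) ∧ ∀ i ∈ Act zb gz, ⟪p i - lb, w⟫ = 0) := by
    refine ⟨(⨅ i ∈ S0, LinearMap.ker (a i)) ⊓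
      ⨅ i ∈ Act zb gz, LinearMap.ker ((innerSL ℝ (p i - lb) : EuclideanSpace ℝ (Fin m) →L[ℝ] ℝ) : EuclideanSpace ℝ (Fin m) →ₗ[ℝ] ℝ), fun w => ?_⟩
    simp only [Submodule.mem_inf, Submodule.mem_iInf, LinearMap.mem_ker,
      ContinuousLinearMap.coe_coe, innerSL_apply_apply]
  have hKexp_SK : ∀ w, ((∀ i ∈ S0, a i w ≤ 0) ∧ ∀ i ∈ Act zb gz, ⟪p i, w⟫ ≤ ⟪lb, w⟫) ↔
      w ∈ SK := by
    intro w
    constructor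
    · rintro ⟨h1, h2⟩
      rw [hSKmem]
      constructor
      · intro i hi
        have h3 := hmax w h1 h2 (lb + q i) (hqP i hi)
        rw [inner_add_left, hq] at h3
        linarith
      · intro i hi
        have h3 := hmax w h1 h2 (p i) (hpiP i hi)
        rw [inner_sub_left]
        linarith
    · intro hw
      rw [hSKmem] at hw
      refine ⟨fun i hi => (hw.1 i hi).le, fun i hi => ?_⟩
      have := hw.2 i hi
      rw [inner_sub_left] at this
      linarith
  -- subderivative computation
  have hAne : (Act zb gz).Nonempty := hAct_ne zb gz hgz
  have hsdtop : ∀ (w : EuclideanSpace ℝ (Fin m)), ¬(∀ i ∈ S0, a i w ≤ 0) →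
      subderiv g zb w = ⊤ := by
    intro w hc0
    push_neg at hc0
    obtain ⟨i, hiS0, hpos⟩ := hc0
    obtain ⟨hci, hai⟩ := (hS0mem i).1 hiS0
    rw [← top_le_iff]
    unfold subderiv
    refine Filter.le_liminf_of_le (by isBoundedDefault) ?_
    have h1 : ∀ᶠ t in 𝓝[>] (0:ℝ), 0 < t := by
      filter_upwards [self_mem_nhdsWithin] with t ht
      exact Set.mem_Ioi.1 ht
    have h2 : ∀ᶠ w' in 𝓝 w, 0 < a i w' := by
      have hcont : Continuous fun w' : EuclideanSpace ℝ (Fin m) => a i w' :=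
        (a i).continuous_of_finiteDimensional
      exact (hcont.tendsto w).eventually (eventually_gt_nhds hpos)
    filter_upwards [h1.prod_mk h2] with pr hpr
    obtain ⟨ht, hw'⟩ := hpr
    have hgx : g (zb + pr.1 • pr.2) = ⊤ := by
      rcases hcases (zb + pr.1 • pr.2) with h | ⟨ξ, hξ⟩
      · exact h
      · exfalso
        have h3 := ((hL2 _ ξ).1 hξ.le).1 i hci
        rw [map_add, map_smul] at h3
        simp only [smul_eq_mul] at h3
        nlinarith
    rw [hgx, hgz, EReal.top_sub_coe, EReal.top_mul_of_pos
      (show (0:EReal) < ((pr.1⁻¹ : ℝ) : EReal) from by exact_mod_cast inv_pos.2 ht)]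
  have hsd : ∀ (w : EuclideanSpace ℝ (Fin m)), (∀ i ∈ S0, a i w ≤ 0) →
      subderiv g zb w =
        (((Act zb gz).sup' hAne (fun i => ⟪p i, w⟫) : ℝ) : EReal) := by
    intro w hc0
    set M : ℝ := (Act zb gz).sup' hAne (fun i => ⟪p i, w⟫) with hM
    obtain ⟨i₁, hi₁, hsup⟩ := Finset.exists_mem_eq_sup' hAne (fun i => ⟪p i, w⟫)
    have hsup' : M = ⟪p i₁, w⟫ := hsup
    have hiI : i₁ ∈ Iminus := ((hActmem _ _ _).1 hi₁).1
    have hφzb : φ i₁ zb = gz := ((hActmem _ _ _).1 hi₁).2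
    refine le_antisymm ?_ ?_
    · unfold subderiv
      refine Filter.liminf_le_of_frequently_le ?_ (by isBoundedDefault)
      rw [Filter.frequently_iff]
      intro U hU
      obtain ⟨T, hT, V, hV, hsub⟩ := Filter.mem_prod_iff.1 hU
      have hgood : ∀ᶠ t in 𝓝[>] (0:ℝ), 0 < t ∧ g (zb + t • w) = ((gz + t * M : ℝ) : EReal) := by
        have h1 := hupper zb gz hgz w (fun i hc he => hc0 i ((hS0mem i).2 ⟨hc, he⟩)) M
          (fun i hi => Finset.le_sup' (fun j => ⟪p j, w⟫) hi)
        filter_upwards [h1] with t htt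
        obtain ⟨ht, hle⟩ := htt
        refine ⟨ht, le_antisymm hle ?_⟩
        have h2 := hphile i₁ hiI (zb + t • w)
        have h3 : φ i₁ (zb + t • w) = gz + t * M := by
          rw [hφadd i₁ hiI, real_inner_smul_right, hφzb, ← hsup']
        rw [h3] at h2
        exact h2
      have hTe : ∀ᶠ t in 𝓝[>] (0:ℝ), t ∈ T := by
        rwa [Filter.eventually_iff, Set.setOf_mem_eq]
      obtain ⟨t, htT, ht, hgt⟩ := (hTe.and hgood).exists
      refine ⟨(t, w), hsub ⟨htT, mem_of_mem_nhds hV⟩, ?_⟩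
      show (g (zb + t • w) - g zb) * ((t⁻¹ : ℝ) : EReal) ≤ (M : EReal)
      rw [hgt, hgz, ← EReal.coe_sub, ← EReal.coe_mul]
      have h4 : (gz + t * M - gz) * t⁻¹ = M := by field_simp; ring
      rw [h4]
    · have hge : ∀ cr : ℝ, cr < M → (cr : EReal) ≤ subderiv g zb w := by
        intro cr hcr
        unfold subderiv
        refine Filter.le_liminf_of_le (by isBoundedDefault) ?_
        have h1 : ∀ᶠ t in 𝓝[>] (0:ℝ), 0 < t := by
          filter_upwards [self_mem_nhdsWithin] with t ht
          exact Set.mem_Ioi.1 ht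
        have h2 : ∀ᶠ w' in 𝓝 w, cr < ⟪p i₁, w'⟫ := by
          have hcont : Continuous fun w' : EuclideanSpace ℝ (Fin m) => ⟪p i₁, w'⟫ :=
            Continuous.inner continuous_const continuous_id
          refine (hcont.tendsto w).eventually (eventually_gt_nhds ?_)
          rw [hsup'] at hcr
          exact hcr
        filter_upwards [h1.prod_mk h2] with pr hpr
        obtain ⟨ht, hw'⟩ := hpr
        rcases hcases (zb + pr.1 • pr.2) with htop | ⟨ξ, hξ⟩
        · rw [htop, hgz, EReal.top_sub_coe, EReal.top_mul_of_pos
            (show (0:EReal) < ((pr.1⁻¹ : ℝ) : EReal) from by exact_mod_cast inv_pos.2 ht)]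
          exact le_top
        · rw [hξ, hgz, ← EReal.coe_sub, ← EReal.coe_mul, EReal.coe_le_coe_iff]
          have h5 : φ i₁ (zb + pr.1 • pr.2) ≤ ξ := ((hL2 _ ξ).1 hξ.le).2 i₁ hiI
          have h6 : φ i₁ (zb + pr.1 • pr.2) = gz + pr.1 * ⟪p i₁, pr.2⟫ := by
            rw [hφadd i₁ hiI, real_inner_smul_right, hφzb]
          rw [h6] at h5
          rw [mul_comm, ← div_eq_inv_mul, le_div_iff₀ ht]
          nlinarith
      by_contra h
      push_neg at h
      obtain ⟨cr, hc1, hc2⟩ := EReal.exists_between_coe_real h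
      exact absurd (hge cr (EReal.coe_lt_coe_iff.1 hc2)) (not_le.2 hc1)
  -- the critical cone equals SK
  have hKconeSK : Kcone g zb lb = (SK : Set (EuclideanSpace ℝ (Fin m))) := by
    ext w
    show subderiv g zb w = ((⟪lb, w⟫ : ℝ) : EReal) ↔ w ∈ SK
    by_cases hc0 : ∀ i ∈ S0, a i w ≤ 0
    · rw [hsd w hc0, EReal.coe_eq_coe_iff]
      have hlbM : ⟪lb, w⟫ ≤ (Act zb gz).sup' hAne (fun i => ⟪p i, w⟫) :=
        hlbP w hc0 _ (fun i hi => Finset.le_sup' (fun j => ⟪p j, w⟫) hi)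
      constructor
      · intro hMw
        refine (hKexp_SK w).1 ⟨hc0, fun i hi => ?_⟩
        calc ⟪p i, w⟫ ≤ (Act zb gz).sup' hAne (fun j => ⟪p j, w⟫) :=
              Finset.le_sup' (fun j => ⟪p j, w⟫) hi
          _ = ⟪lb, w⟫ := hMw
      · intro hw
        obtain ⟨h1, h2⟩ := (hKexp_SK w).2 hw
        exact le_antisymm (Finset.sup'_le hAne _ h2) hlbM
    · rw [hsdtop w hc0]
      constructor
      · intro h
        exact absurd h (by simp)
      · intro hw
        exact absurd ((hKexp_SK w).2 hw).1 hc0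
  -- orthogonal complement of SK sits inside the vector span of the subdifferential
  have hVK : (vectorSpan ℝ (subdiff g zb))ᗮ ≤ SK := by
    intro w hw
    rw [Submodule.mem_orthogonal] at hw
    rw [hSKmem]
    constructor
    · intro i hi
      have h1 : q i ∈ vectorSpan ℝ (subdiff g zb) := by
        have := vsub_mem_vectorSpan ℝ (hqP i hi) hl
        simpa using this
      have h2 := hw _ h1
      rwa [hq] at h2
    · intro i hi
      have h1 : p i - lb ∈ vectorSpan ℝ (subdiff g zb) := by
        have := vsub_mem_vectorSpan ℝ (hpiP i hi) hl
        simpa using this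
      exact hw _ h1
  have hSKperp_V : SKᗮ ≤ vectorSpan ℝ (subdiff g zb) := by
    have h1 := Submodule.orthogonal_le hVK
    have h2 : (vectorSpan ℝ (subdiff g zb))ᗮᗮ = vectorSpan ℝ (subdiff g zb) :=
      Submodule.orthogonal_orthogonal _
    rwa [h2] at h1
  obtain ⟨ε2, hε2, hball2⟩ := ri_ball hri
  -- pattern polyhedra
  set Pσ : Finset (Fin s) × Finset (Fin s) → Set (EuclideanSpace ℝ (Fin m)) := fun σ =>
    {v | ∀ (w : EuclideanSpace ℝ (Fin m)) (r : ℝ), (∀ i ∈ σ.1, a i w ≤ 0) →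
      (∀ i ∈ σ.2, ⟪p i, w⟫ ≤ r) → ⟪v, w⟫ ≤ r} with hPσdef
  have hPclosed : ∀ σ, IsClosed (Pσ σ) := by
    intro σ
    have heq : Pσ σ = ⋂ (w : EuclideanSpace ℝ (Fin m)), ⋂ (r : ℝ),
        {v | (∀ i ∈ σ.1, a i w ≤ 0) → (∀ i ∈ σ.2, ⟪p i, w⟫ ≤ r) → ⟪v, w⟫ ≤ r} := by
      ext v
      simp only [hPσdef, Set.mem_iInter, Set.mem_setOf_eq]
    rw [heq]
    refine isClosed_iInter fun w => isClosed_iInter fun r => ?_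
    by_cases h1 : (∀ i ∈ σ.1, a i w ≤ 0) ∧ (∀ i ∈ σ.2, ⟪p i, w⟫ ≤ r)
    · have heq2 : {v : EuclideanSpace ℝ (Fin m) |
          (∀ i ∈ σ.1, a i w ≤ 0) → (∀ i ∈ σ.2, ⟪p i, w⟫ ≤ r) → ⟪v, w⟫ ≤ r}
          = {v | ⟪v, w⟫ ≤ r} := by
        ext v
        simp only [Set.mem_setOf_eq]
        exact ⟨fun h => h h1.1 h1.2, fun h _ _ => h⟩
      rw [heq2]
      exact isClosed_le (Continuous.inner continuous_id continuous_const) continuous_const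
    · have heq2 : {v : EuclideanSpace ℝ (Fin m) |
          (∀ i ∈ σ.1, a i w ≤ 0) → (∀ i ∈ σ.2, ⟪p i, w⟫ ≤ r) → ⟪v, w⟫ ≤ r}
          = Set.univ := by
        ext v
        simp only [Set.mem_setOf_eq, Set.mem_univ, iff_true]
        intro h2 h3
        exact absurd ⟨h2, h3⟩ h1
      rw [heq2]
      exact isClosed_univ
  -- the open neighborhood
  set U : Set (EuclideanSpace ℝ (Fin m) × EuclideanSpace ℝ (Fin m)) :=
    {zv | (∀ i, (c i = 0 ∧ a i zb < β i) → a i zv.1 < β i)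
      ∧ (∀ i, (i ∈ Iminus ∧ φ i zb < gz) → φ i zv.1 < gz + ⟪lb, zv.1 - zb⟫)
      ∧ (∀ σ : Finset (Fin s) × Finset (Fin s), σ.2.Nonempty → lb ∉ Pσ σ → zv.2 ∉ Pσ σ)}
    with hUdef
  have hUopen : IsOpen U := by
    have heq : U = (⋂ i, {zv : EuclideanSpace ℝ (Fin m) × EuclideanSpace ℝ (Fin m) |
          (c i = 0 ∧ a i zb < β i) → a i zv.1 < β i})
        ∩ ((⋂ i, {zv : EuclideanSpace ℝ (Fin m) × EuclideanSpace ℝ (Fin m) |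
          (i ∈ Iminus ∧ φ i zb < gz) → φ i zv.1 < gz + ⟪lb, zv.1 - zb⟫})
        ∩ (⋂ σ : Finset (Fin s) × Finset (Fin s),
          {zv : EuclideanSpace ℝ (Fin m) × EuclideanSpace ℝ (Fin m) |
          σ.2.Nonempty → lb ∉ Pσ σ → zv.2 ∉ Pσ σ})) := by
      ext zv
      simp only [hUdef, Set.mem_setOf_eq, Set.mem_inter_iff, Set.mem_iInter]
    rw [heq]
    refine IsOpen.inter (isOpen_iInter_of_finite fun i => ?_)
      (IsOpen.inter (isOpen_iInter_of_finite fun i => ?_)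
        (isOpen_iInter_of_finite fun σ => ?_))
    · by_cases h1 : c i = 0 ∧ a i zb < β i
      · have heq2 : {zv : EuclideanSpace ℝ (Fin m) × EuclideanSpace ℝ (Fin m) |
            (c i = 0 ∧ a i zb < β i) → a i zv.1 < β i} = {zv | a i zv.1 < β i} := by
          ext zv
          simp only [Set.mem_setOf_eq]
          exact ⟨fun h => h h1, fun h _ => h⟩
        rw [heq2]
        exact isOpen_lt (((a i).continuous_of_finiteDimensional).comp continuous_fst)
          continuous_const
      · have heq2 : {zv : EuclideanSpace ℝ (Fin m) × EuclideanSpace ℝ (Fin m) |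
            (c i = 0 ∧ a i zb < β i) → a i zv.1 < β i} = Set.univ := by
          ext zv
          simp only [Set.mem_setOf_eq, Set.mem_univ, iff_true]
          intro h2
          exact absurd h2 h1
        rw [heq2]; exact isOpen_univ
    · by_cases h1 : i ∈ Iminus ∧ φ i zb < gz
      · have heq2 : {zv : EuclideanSpace ℝ (Fin m) × EuclideanSpace ℝ (Fin m) |
            (i ∈ Iminus ∧ φ i zb < gz) → φ i zv.1 < gz + ⟪lb, zv.1 - zb⟫}
            = {zv | φ i zv.1 < gz + ⟪lb, zv.1 - zb⟫} := by
          ext zv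
          simp only [Set.mem_setOf_eq]
          exact ⟨fun h => h h1, fun h _ => h⟩
        rw [heq2]
        have hc1 : Continuous fun zv : EuclideanSpace ℝ (Fin m) × EuclideanSpace ℝ (Fin m) =>
            φ i zv.1 := by
          have : (fun zv : EuclideanSpace ℝ (Fin m) × EuclideanSpace ℝ (Fin m) => φ i zv.1)
              = fun zv => (a i zv.1 - β i) / (-(c i)) := by
            funext zv; rw [hφ]
          rw [this]
          exact (((((a i).continuous_of_finiteDimensional).comp continuous_fst).sub
            continuous_const).div_const _)
        have hc2 : Continuous fun zv : EuclideanSpace ℝ (Fin m) × EuclideanSpace ℝ (Fin m) =>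
            gz + ⟪lb, zv.1 - zb⟫ :=
          continuous_const.add (Continuous.inner continuous_const
            (continuous_fst.sub continuous_const))
        exact isOpen_lt hc1 hc2
      · have heq2 : {zv : EuclideanSpace ℝ (Fin m) × EuclideanSpace ℝ (Fin m) |
            (i ∈ Iminus ∧ φ i zb < gz) → φ i zv.1 < gz + ⟪lb, zv.1 - zb⟫} = Set.univ := by
          ext zv
          simp only [Set.mem_setOf_eq, Set.mem_univ, iff_true]
          intro h2
          exact absurd h2 h1
        rw [heq2]; exact isOpen_univ
    · by_cases h1 : σ.2.Nonempty ∧ lb ∉ Pσ σ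
      · have heq2 : {zv : EuclideanSpace ℝ (Fin m) × EuclideanSpace ℝ (Fin m) |
            σ.2.Nonempty → lb ∉ Pσ σ → zv.2 ∉ Pσ σ} = (Prod.snd) ⁻¹' (Pσ σ)ᶜ := by
          ext zv
          simp only [Set.mem_setOf_eq, Set.mem_preimage, Set.mem_compl_iff]
          exact ⟨fun h => h h1.1 h1.2, fun h _ _ => h⟩
        rw [heq2]
        exact ((hPclosed σ).isOpen_compl).preimage continuous_snd
      · have heq2 : {zv : EuclideanSpace ℝ (Fin m) × EuclideanSpace ℝ (Fin m) |
            σ.2.Nonempty → lb ∉ Pσ σ → zv.2 ∉ Pσ σ} = Set.univ := by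
          ext zv
          simp only [Set.mem_setOf_eq, Set.mem_univ, iff_true]
          intro h2 h3
          exact absurd ⟨h2, h3⟩ h1
        rw [heq2]; exact isOpen_univ
  have hU0 : (zb, lb) ∈ U := by
    refine ⟨fun i h => h.2, fun i h => ?_, fun σ hne hlb => hlb⟩
    have : (zb, lb).1 - zb = (0 : EuclideanSpace ℝ (Fin m)) := sub_self zb
    rw [this, inner_zero_right, add_zero]
    exact h.2
  obtain ⟨ε1, hε1, hball1⟩ := Metric.isOpen_iff.1 hUopen (zb, lb) hU0
  refine ⟨SK, min ε1 ε2, lt_min hε1 hε2, hKconeSK, ?_⟩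
  intro z v hz hv
  have hzU : (z, v) ∈ U := by
    apply hball1
    rw [mem_ball, Prod.dist_eq]
    exact max_lt (hz.trans_le (min_le_left _ _)) (hv.trans_le (min_le_left _ _))
  obtain ⟨hU1, hU2, hU3⟩ := hzU
  constructor
  · -- forward direction: subgradients near (zb,lb) lie in the affine model
    intro hv'
    obtain ⟨γ, hγ⟩ : ∃ γ : ℝ, g z = (γ : EReal) :=
      ⟨(g z).toReal, ((g z).coe_toReal (hgtop z v hv') (hbot z)).symm⟩
    have hγlb : gz + ⟪lb, z - zb⟫ ≤ γ := by
      have h1 := hl z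
      rw [hgz, hγ] at h1
      have h2 : ((gz + ⟪lb, z - zb⟫ : ℝ) : EReal) ≤ (γ : EReal) := by
        rw [EReal.coe_add]; exact h1
      exact EReal.coe_le_coe_iff.1 h2
    set Sz : Finset (Fin s) := Finset.univ.filter (fun i => c i = 0 ∧ a i z = β i) with hSzdef
    have hSzmem : ∀ i, i ∈ Sz ↔ (c i = 0 ∧ a i z = β i) := by intro i; simp [hSzdef]
    have hSzS0 : ∀ i ∈ Sz, i ∈ S0 := by
      intro i hi
      obtain ⟨hc, he⟩ := (hSzmem i).1 hi
      have h1 : a i zb ≤ β i := ((hL2 zb gz).1 hgz.le).1 i hc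
      rcases lt_or_eq_of_le h1 with h2 | h2
      · exact absurd he (hU1 i ⟨hc, h2⟩).ne
      · exact (hS0mem i).2 ⟨hc, h2⟩
    have hTzA : ∀ i ∈ Act z γ, i ∈ Act zb gz := by
      intro i hi
      obtain ⟨hiI, hact⟩ := (hActmem z γ i).1 hi
      have h1 : φ i zb ≤ gz := ((hL2 zb gz).1 hgz.le).2 i hiI
      rcases lt_or_eq_of_le h1 with h2 | h2
      · exact absurd (by linarith [hU2 i ⟨hiI, h2⟩] : φ i z < γ) (by rw [hact]; exact lt_irrefl γ)
      · exact (hActmem zb gz i).2 ⟨hiI, h2⟩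
    have hvP : v ∈ Pσ (Sz, Act z γ) := by
      intro w r hw hr
      exact hchar z γ hγ v hv' w (fun i hc he => hw i ((hSzmem i).2 ⟨hc, he⟩)) r hr
    have hlbσ : lb ∈ Pσ (Sz, Act z γ) := by
      by_contra hn
      exact (hU3 (Sz, Act z γ) (hAct_ne z γ hγ) hn) hvP
    have hzw : ∀ i ∈ Sz, a i (z - zb) = 0 := by
      intro i hi
      obtain ⟨hc, he⟩ := (hSzmem i).1 hi
      have h2 : a i zb = β i := ((hS0mem i).1 (hSzS0 i hi)).2
      rw [map_sub, he, h2, sub_self]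
    have hTc : ∀ i ∈ Act z γ, ⟪p i, z - zb⟫ = γ - gz := by
      intro i hi
      obtain ⟨hiI, hact⟩ := (hActmem z γ i).1 hi
      have h2 : φ i zb = gz := ((hActmem zb gz i).1 (hTzA i hi)).2
      have h3 := hφadd i hiI zb (z - zb)
      rw [add_sub_cancel] at h3
      rw [hact, h2] at h3
      linarith
    have happ1 : ⟪lb, z - zb⟫ ≤ γ - gz :=
      hlbσ (z - zb) (γ - gz) (fun i hi => (hzw i hi).le) (fun i hi => (hTc i hi).le)
    have happ2 : ⟪lb, -(z - zb)⟫ ≤ -(γ - gz) := by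
      refine hlbσ (-(z - zb)) (-(γ - gz)) (fun i hi => ?_) (fun i hi => ?_)
      · rw [map_neg, hzw i hi, neg_zero]
      · rw [inner_neg_right, hTc i hi]
    have hceq : γ - gz = ⟪lb, z - zb⟫ := by
      rw [inner_neg_right] at happ2
      linarith
    constructor
    · -- z - zb ∈ SK
      refine (hKexp_SK _).1 ⟨?_, ?_⟩
      · intro i hi
        obtain ⟨hc, he⟩ := (hS0mem i).1 hi
        have h1 : a i z ≤ β i := ((hL2 z γ).1 hγ.le).1 i hc
        rw [map_sub, he]
        linarith
      · intro i hi
        obtain ⟨hiI, hact⟩ := (hActmem zb gz i).1 hi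
        have h1 : φ i z ≤ γ := ((hL2 z γ).1 hγ.le).2 i hiI
        have h2 := hφadd i hiI zb (z - zb)
        rw [add_sub_cancel, hact] at h2
        rw [← hceq]
        linarith
    · -- v - lb ∈ SKᗮ
      rw [Submodule.mem_orthogonal]
      intro w' hw'
      obtain ⟨hw1, hw2⟩ := (hSKmem w').1 hw'
      have hub : ∀ i ∈ Act z γ, ⟪p i, w'⟫ ≤ ⟪lb, w'⟫ := by
        intro i hi
        have h1 := hw2 i (hTzA i hi)
        rw [inner_sub_left] at h1
        linarith
      have hb1 : ⟪v, w'⟫ ≤ ⟪lb, w'⟫ :=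
        hvP w' ⟪lb, w'⟫ (fun i hi => (hw1 i (hSzS0 i hi)).le) hub
      have hb2 : ⟪v, -w'⟫ ≤ ⟪lb, -w'⟫ := by
        refine hvP (-w') ⟪lb, -w'⟫ (fun i hi => ?_) (fun i hi => ?_)
        · rw [map_neg, hw1 i (hSzS0 i hi), neg_zero]
        · rw [inner_neg_right, inner_neg_right]
          have h1 := hw2 i (hTzA i hi)
          rw [inner_sub_left] at h1
          linarith
      rw [inner_neg_right, inner_neg_right] at hb2
      have h9 : ⟪w', v - lb⟫ = ⟪v, w'⟫ - ⟪lb, w'⟫ := by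
        rw [real_inner_comm, inner_sub_left]
      rw [h9]
      linarith
  · -- backward direction
    rintro ⟨hw, hu⟩
    have hu2 : v - lb ∈ vectorSpan ℝ (subdiff g zb) := hSKperp_V hu
    have hunorm : ‖v - lb‖ < ε2 := by
      rw [← dist_eq_norm]
      exact hv.trans_le (min_le_right _ _)
    have hlbu : v ∈ subdiff g zb := by
      have h1 := hball2 _ hu2 hunorm
      have h2 : lb + (v - lb) = v := by abel
      rwa [h2] at h1
    obtain ⟨hw1, hw2⟩ := (hSKmem _).1 hw
    have hgzval : g z = ((gz + ⟪lb, z - zb⟫ : ℝ) : EReal) := by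
      refine le_antisymm ((hL2 z _).2 ⟨?_, ?_⟩) ?_
      · intro i hc
        by_cases he : a i zb = β i
        · have h1 := hw1 i ((hS0mem i).2 ⟨hc, he⟩)
          rw [map_sub, he] at h1
          linarith
        · have hlt : a i zb < β i := lt_of_le_of_ne (((hL2 zb gz).1 hgz.le).1 i hc) he
          exact (hU1 i ⟨hc, hlt⟩).le
      · intro i hi
        by_cases hact : φ i zb = gz
        · have h2 := hw2 i ((hActmem zb gz i).2 ⟨hi, hact⟩)
          rw [inner_sub_left] at h2
          have h3 := hφadd i hi zb (z - zb)
          rw [add_sub_cancel, hact] at h3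
          linarith
        · have hlt : φ i zb < gz := lt_of_le_of_ne (((hL2 zb gz).1 hgz.le).2 i hi) hact
          exact (hU2 i ⟨hi, hlt⟩).le
      · have h1 := hl z
        rw [hgz] at h1
        rw [EReal.coe_add]
        exact h1
    intro x
    have h4 := hlbu x
    rw [hgz] at h4
    rw [hgzval]
    have h6 : ⟪v, z - zb⟫ = ⟪lb, z - zb⟫ := by
      have h7 := (Submodule.mem_orthogonal SK (v - lb)).1 hu _ hw
      rw [real_inner_comm, inner_sub_left] at h7
      linarith
    have h8 : gz + ⟪lb, z - zb⟫ + ⟪v, x - z⟫ = gz + ⟪v, x - zb⟫ := by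
      have h5 : ⟪v, x - z⟫ = ⟪v, x - zb⟫ - ⟪v, z - zb⟫ := by
        rw [← inner_sub_right]
        congr 1
        abel
      rw [h5, h6]
      ring
    calc ((gz + ⟪lb, z - zb⟫ : ℝ) : EReal) + ((⟪v, x - z⟫ : ℝ) : EReal)
        = ((gz + ⟪lb, z - zb⟫ + ⟪v, x - z⟫ : ℝ) : EReal) := by rw [← EReal.coe_add]
      _ = ((gz + ⟪v, x - zb⟫ : ℝ) : EReal) := by rw [h8]
      _ = (gz : EReal) + ((⟪v, x - zb⟫ : ℝ) : EReal) := by rw [← EReal.coe_add]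
      _ ≤ g x := h4








/-- under `lb ∈ ri ∂g(zb)`, the Clarke tangent cone, the tangent cone,
and the paratingent cone to `gph ∂g` at `(zb,lb)` all equal `K × K^⊥`; in particular
`∂g` is strictly proto-differentiable at `zb` for `lb`. -/
theorem stmt13 {m : ℕ} (g : EuclideanSpace ℝ (Fin m) → EReal) (hg : IsPolyhedralFn g)
    (zb lb : EuclideanSpace ℝ (Fin m)) (hl : lb ∈ subdiff g zb)
    (hri : lb ∈ intrinsicInterior ℝ (subdiff g zb)) :
    clarkeT {p : EuclideanSpace ℝ (Fin m) × EuclideanSpace ℝ (Fin m) |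
          p.2 ∈ subdiff g p.1} (zb, lb) =
      (Kcone g zb lb) ×ˢ {u | ∀ w ∈ Kcone g zb lb, (inner ℝ w u : ℝ) = 0} ∧
    btcone {p : EuclideanSpace ℝ (Fin m) × EuclideanSpace ℝ (Fin m) |
          p.2 ∈ subdiff g p.1} (zb, lb) =
      (Kcone g zb lb) ×ˢ {u | ∀ w ∈ Kcone g zb lb, (inner ℝ w u : ℝ) = 0} ∧
    paraT {p : EuclideanSpace ℝ (Fin m) × EuclideanSpace ℝ (Fin m) |
          p.2 ∈ subdiff g p.1} (zb, lb) =
      (Kcone g zb lb) ×ˢ {u | ∀ w ∈ Kcone g zb lb, (inner ℝ w u : ℝ) = 0} := by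
  obtain ⟨S, ε, hε, hK, hloc⟩ := main_local g hg zb lb hl hri
  have hxb : ((zb, lb) : EuclideanSpace ℝ (Fin m) × EuclideanSpace ℝ (Fin m)) ∈
      {p : EuclideanSpace ℝ (Fin m) × EuclideanSpace ℝ (Fin m) | p.2 ∈ subdiff g p.1} := hl
  have hloc' : ∀ p : EuclideanSpace ℝ (Fin m) × EuclideanSpace ℝ (Fin m),
      dist p (zb, lb) < ε →
      (p ∈ {p : EuclideanSpace ℝ (Fin m) × EuclideanSpace ℝ (Fin m) | p.2 ∈ subdiff g p.1} ↔
        p - (zb, lb) ∈ S.prod Sᗮ) := by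
    intro p hp
    rw [Prod.dist_eq, max_lt_iff] at hp
    have h1 := hloc p.1 p.2 hp.1 hp.2
    rw [Submodule.mem_prod]
    exact h1
  obtain ⟨h1, h2, h3⟩ := cone_eqs (S.prod Sᗮ) hε hxb hloc'
  have hset : ((S.prod Sᗮ : Submodule ℝ (EuclideanSpace ℝ (Fin m) × EuclideanSpace ℝ (Fin m))) :
      Set (EuclideanSpace ℝ (Fin m) × EuclideanSpace ℝ (Fin m))) =
      (Kcone g zb lb) ×ˢ {u | ∀ w ∈ Kcone g zb lb, (inner ℝ w u : ℝ) = 0} := by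
    ext ⟨w, u⟩
    simp only [SetLike.mem_coe, Submodule.mem_prod, Set.mem_prod, Set.mem_setOf_eq]
    constructor
    · rintro ⟨hw, hu⟩
      refine ⟨by rw [hK]; exact hw, fun w' hw' => ?_⟩
      rw [hK] at hw'
      exact (Submodule.mem_orthogonal S u).1 hu w' hw'
    · rintro ⟨hw, hu⟩
      rw [hK] at hw
      refine ⟨hw, (Submodule.mem_orthogonal S u).2 fun w' hw' => ?_⟩
      exact hu w' (by rw [hK]; exact hw')
  rw [h1, h2, h3, hset]
  exact ⟨rfl, rfl, rfl⟩
end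
end

section
/- Let C ⊆ ℝᵐ be a polyhedral convex set, x ∈ ℝᵐ, and z = P_C(x) the metric projection of x onto C. Then the projection mapping P_C is continuously differentiable on a neighborhood of x if and only if x − z ∈ ri N_C(z). -/
open Filter Topology Set Metric

noncomputable section

/-- Uniqueness of the metric projection given the variational characterization. -/
theorem proj_unique {E : Type*} [NormedAddCommGroup E] [InnerProductSpace ℝ E] {C : Set E} {P : E → E}
    (hP : ∀ y, P y ∈ C ∧ ∀ c ∈ C, ‖y - P y‖ ≤ ‖y - c‖) {y z' : E}
    (hz' : z' ∈ C) (hn : y - z' ∈ ncone C z') : P y = z' := by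
  have h1 := (hP y).1
  have h2 := (hP y).2 z' hz'
  have hip : (inner ℝ (y - z') (P y - z') : ℝ) ≤ 0 := hn (P y) h1
  have key : ‖y - P y‖ ^ 2 = ‖y - z'‖ ^ 2 - 2 * inner ℝ (y - z') (P y - z') + ‖P y - z'‖ ^ 2 := by
    have : y - P y = (y - z') - (P y - z') := by abel
    rw [this, norm_sub_sq_real]
  have hle : ‖y - P y‖ ^ 2 ≤ ‖y - z'‖ ^ 2 := by
    have := pow_le_pow_left₀ (norm_nonneg _) h2 2
    simpa using this
  have : ‖P y - z'‖ ^ 2 ≤ 0 := by nlinarith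
  have : ‖P y - z'‖ = 0 := by nlinarith [sq_nonneg ‖P y - z'‖, norm_nonneg (P y - z')]
  have := norm_eq_zero.1 this
  rwa [sub_eq_zero] at this

/-- The residual of the metric projection lies in the normal cone. -/
theorem proj_mem_ncone {E : Type*} [NormedAddCommGroup E] [InnerProductSpace ℝ E] {C : Set E} (hconv : Convex ℝ C) {P : E → E}
    (hP : ∀ y, P y ∈ C ∧ ∀ c ∈ C, ‖y - P y‖ ≤ ‖y - c‖) (x : E) :
    x - P x ∈ ncone C (P x) := by
  set z := P x with hzdef
  have hz : z ∈ C := (hP x).1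
  intro y hy
  by_contra h
  push_neg at h
  set d := y - z with hd
  have hdne : d ≠ 0 := by
    intro h0; rw [h0] at h; simp at h
  have hdsq : (0:ℝ) < ‖d‖ ^ 2 := by have := norm_pos_iff.mpr hdne; positivity
  set t : ℝ := min 1 (inner ℝ (x - z) d / ‖d‖ ^ 2) with ht
  have htpos : 0 < t := lt_min one_pos (div_pos h hdsq)
  have ht1 : t ≤ 1 := min_le_left _ _
  have hmem : z + t • d ∈ C := by
    have := hconv hz hy (by linarith : (0:ℝ) ≤ 1 - t) htpos.le (by ring)
    convert this using 1
    simp only [hd]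
    module
  have hproj := (hP x).2 _ hmem
  have hexp : ‖x - (z + t • d)‖ ^ 2
      = ‖x - z‖ ^ 2 - 2 * t * inner ℝ (x - z) d + t ^ 2 * ‖d‖ ^ 2 := by
    have h1 : x - (z + t • d) = (x - z) - t • d := by abel
    rw [h1, norm_sub_sq_real, real_inner_smul_right, norm_smul]
    simp [mul_pow, Real.norm_eq_abs, abs_of_pos htpos]
    ring
  have hge : ‖x - z‖ ^ 2 ≤ ‖x - (z + t • d)‖ ^ 2 := by
    have := pow_le_pow_left₀ (norm_nonneg _) hproj 2
    simpa [hzdef] using this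
  have htle : t * ‖d‖ ^ 2 ≤ inner ℝ (x - z) d := by
    have : t ≤ inner ℝ (x - z) d / ‖d‖ ^ 2 := min_le_right _ _
    calc t * ‖d‖ ^ 2 ≤ (inner ℝ (x - z) d / ‖d‖ ^ 2) * ‖d‖ ^ 2 := by nlinarith
    _ = inner ℝ (x - z) d := by field_simp
  nlinarith

set_option maxHeartbeats 2000000 in
/-- the metric projection onto a polyhedral convex set is `C¹` on a
neighborhood of `x` iff `x − P_C(x) ∈ ri N_C(P_C(x))`. -/
theorem stmt15 {m : ℕ} (C : Set (EuclideanSpace ℝ (Fin m)))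
    (hC : IsPolyhedralSet C) (hne : C.Nonempty)
    (P : EuclideanSpace ℝ (Fin m) → EuclideanSpace ℝ (Fin m))
    (hP : ∀ y, P y ∈ C ∧ ∀ c ∈ C, ‖y - P y‖ ≤ ‖y - c‖)
    (x : EuclideanSpace ℝ (Fin m)) :
    (∃ U ∈ 𝓝 x, ContDiffOn ℝ 1 P U) ↔
      x - P x ∈ intrinsicInterior ℝ (ncone C (P x)) := by
  classical
  obtain ⟨s, b, β, hCdef⟩ := hC
  -- Riesz representatives of the defining functionals
  set r : Fin s → EuclideanSpace ℝ (Fin m) := fun i =>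
    (InnerProductSpace.toDual ℝ _).symm ((b i).toContinuousLinearMap) with hrdef
  have hr : ∀ i y, (inner ℝ (r i) y : ℝ) = b i y := by
    intro i y
    simp [hrdef, InnerProductSpace.toDual_symm_apply]
  have hCconv : Convex ℝ C := by
    rw [hCdef]
    intro u hu w hw a c ha hc hac i
    simp only [mem_setOf_eq] at hu hw ⊢
    have : b i (a • u + c • w) = a * b i u + c * b i w := by
      simp [map_add, map_smul, smul_eq_mul]
    rw [this]
    calc a * b i u + c * b i w ≤ a * β i + c * β i := by
          have h1 := mul_le_mul_of_nonneg_left (hu i) ha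
          have h2 := mul_le_mul_of_nonneg_left (hw i) hc
          linarith
      _ = β i := by rw [← add_mul, hac, one_mul]
  set z := P x with hzdef
  have hzC : z ∈ C := (hP x).1
  set v := x - z with hvdef
  have hvN : v ∈ ncone C z := proj_mem_ncone hCconv hP x
  have hact_le : ∀ i, b i z ≤ β i := by
    rw [hCdef] at hzC; exact hzC
  set S : Submodule ℝ (EuclideanSpace ℝ (Fin m)) :=
    Submodule.span ℝ (r '' {i | b i z = β i}) with hSdef
  have hrN : ∀ i, b i z = β i → r i ∈ ncone C z := by
    intro i hi y hy
    rw [hCdef] at hy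
    have : (inner ℝ (r i) (y - z) : ℝ) = b i y - b i z := by
      rw [inner_sub_right, hr, hr]
    rw [this, hi]
    linarith [hy i]
  have hrS : ∀ i, b i z = β i → r i ∈ S := fun i hi =>
    Submodule.subset_span ⟨i, hi, rfl⟩
  -- small feasible moves
  have hfeas : ∀ d : EuclideanSpace ℝ (Fin m), (∀ i, b i z = β i → b i d ≤ 0) →
      ∀ᶠ t in 𝓝[>] (0:ℝ), z + t • d ∈ C := by
    intro d hd
    have h : ∀ i, ∀ᶠ t in 𝓝[>] (0:ℝ), b i (z + t • d) ≤ β i := by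
      intro i
      by_cases hi : b i z = β i
      · filter_upwards [eventually_mem_nhdsWithin] with t ht
        have : b i (z + t • d) = β i + t * b i d := by
          rw [map_add, map_smul, smul_eq_mul, hi]
        rw [this]
        nlinarith [hd i hi, (mem_Ioi.1 ht).le]
      · have hlt : b i z < β i := lt_of_le_of_ne (hact_le i) hi
        have hcont : Tendsto (fun t : ℝ => b i (z + t • d)) (𝓝[>] 0) (𝓝 (b i z)) := by
          apply tendsto_nhdsWithin_of_tendsto_nhds
          have hc : Continuous fun t : ℝ => b i (z + t • d) :=
            (b i).continuous_of_finiteDimensional.comp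
              (continuous_const.add (continuous_id.smul continuous_const))
          have := hc.tendsto 0
          simpa using this
        exact (hcont.eventually_lt_const hlt).mono fun t h => h.le
    filter_upwards [eventually_all.2 h] with t ht
    rw [hCdef]; exact ht
  -- the normal cone is contained in S
  have hNS : ncone C z ⊆ (S : Set (EuclideanSpace ℝ (Fin m))) := by
    intro u hu
    set p := u - (S.orthogonalProjectionOnto u : EuclideanSpace ℝ (Fin m)) with hp
    have hpS : p ∈ Sᗮ := S.sub_starProjection_mem_orthogonal u
    have hbp : ∀ i, b i z = β i → b i p = 0 := by
      intro i hi
      rw [← hr]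
      exact Submodule.inner_right_of_mem_orthogonal (hrS i hi) hpS
    have hev := (hfeas p (fun i hi => (hbp i hi).le)).and eventually_mem_nhdsWithin
    obtain ⟨t, htC, htpos⟩ := hev.exists
    have hip := hu (z + t • p) htC
    have h1 : (inner ℝ u (z + t • p - z) : ℝ) = t * inner ℝ u p := by
      rw [add_sub_cancel_left, real_inner_smul_right]
    rw [h1] at hip
    have htpos' : (0:ℝ) < t := mem_Ioi.1 htpos
    have hup : (inner ℝ u p : ℝ) ≤ 0 := by nlinarith
    have hsplit : (inner ℝ u p : ℝ) = inner ℝ (u - p) p + inner ℝ p p := by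
      rw [← inner_add_left]; norm_num
    have huS : u - p ∈ S := by
      rw [hp]; simpa using (S.orthogonalProjectionOnto u).2
    have h0 : (inner ℝ (u - p) p : ℝ) = 0 :=
      Submodule.inner_right_of_mem_orthogonal huS hpS
    have hpp : (inner ℝ p p : ℝ) ≤ 0 := by rw [hsplit, h0] at hup; linarith
    have hp0 : p = 0 := by
      have := real_inner_self_nonpos.mp hpp
      exact this
    have : u = ↑(S.orthogonalProjectionOnto u) := by
      rw [hp] at hp0; rwa [sub_eq_zero] at hp0
    rw [this]; exact (S.orthogonalProjectionOnto u).2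
  have h0N : (0 : EuclideanSpace ℝ (Fin m)) ∈ ncone C z := by
    intro y hy; simp
  have hspan : Submodule.span ℝ (ncone C z) = S := by
    apply le_antisymm
    · exact Submodule.span_le.2 hNS
    · rw [hSdef]
      apply Submodule.span_le.2
      rintro _ ⟨i, hi, rfl⟩
      exact Submodule.subset_span (hrN i hi)
  have haff : (affineSpan ℝ (ncone C z) : Set (EuclideanSpace ℝ (Fin m)))
      = (S : Set (EuclideanSpace ℝ (Fin m))) := by
    rw [← hspan, ← affineSpan_insert_zero, Set.insert_eq_self.2 h0N]
  constructor
  · -- forward direction: C¹ ⇒ relative interior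
    intro hd
    by_contra hri
    set N := ncone C z with hNdef
    -- a sequence in S approaching v from outside N
    have hseq : ∀ n : ℕ, ∃ u : EuclideanSpace ℝ (Fin m),
        u ∈ (S : Set (EuclideanSpace ℝ (Fin m))) ∧ ‖u - v‖ < 1 / (n + 1) ∧ u ∉ N := by
      intro n
      by_contra hcon
      push_neg at hcon
      apply hri
      have hvaff : v ∈ affineSpan ℝ N := subset_affineSpan ℝ _ hvN
      refine ⟨⟨v, hvaff⟩, ?_, rfl⟩
      rw [mem_interior_iff_mem_nhds]
      refine Filter.mem_of_superset
        (Metric.ball_mem_nhds _ (by positivity : (0:ℝ) < 1 / (n + 1))) ?_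
      intro q hq
      have hqS : (q : EuclideanSpace ℝ (Fin m)) ∈ (S : Set (EuclideanSpace ℝ (Fin m))) := by
        rw [← haff]; exact q.2
      have hdist : ‖(q : EuclideanSpace ℝ (Fin m)) - v‖ < 1 / (n + 1) := by
        have h := mem_ball.1 hq
        rw [Subtype.dist_eq, dist_eq_norm] at h
        simpa using h
      exact hcon q hqS hdist
    choose u huS hudist huN using hseq
    -- N is closed and convex
    have hNclosed : IsClosed N := by
      have hNe : N = ⋂ y ∈ C, {u : EuclideanSpace ℝ (Fin m) | (inner ℝ u (y - z) : ℝ) ≤ 0} := by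
        ext u
        simp only [hNdef, ncone, mem_setOf_eq, mem_iInter]
      rw [hNe]
      exact isClosed_biInter fun y _ =>
        isClosed_le (Continuous.inner continuous_id continuous_const) continuous_const
    have hNconvex : Convex ℝ N := by
      intro a ha b2 hb2 a1 c1 ha1 hc1 hac
      intro y hy
      have : (inner ℝ (a1 • a + c1 • b2) (y - z) : ℝ)
          = a1 * inner ℝ a (y - z) + c1 * inner ℝ b2 (y - z) := by
        rw [inner_add_left, real_inner_smul_left, real_inner_smul_left]
      rw [this]
      nlinarith [ha y hy, hb2 y hy, mul_le_mul_of_nonneg_left (ha y hy) ha1,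
        mul_le_mul_of_nonneg_left (hb2 y hy) hc1]
    -- projections onto N
    have hqex : ∀ n : ℕ, ∃ q, q ∈ N ∧ ∀ n' ∈ N, (inner ℝ (u n - q) (n' - q) : ℝ) ≤ 0 := by
      intro n
      obtain ⟨qn, hqN, hqmin⟩ := exists_norm_eq_iInf_of_complete_convex ⟨0, h0N⟩
        hNclosed.isComplete hNconvex (u n)
      exact ⟨qn, hqN, (norm_eq_iInf_iff_real_inner_le_zero hNconvex hqN).1 hqmin⟩
    choose q hqN hqvar using hqex
    set ws : ℕ → EuclideanSpace ℝ (Fin m) := fun n => u n - q n with hwsdef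
    have hwne : ∀ n, ws n ≠ 0 := by
      intro n h
      apply huN n
      rw [hwsdef] at h
      simp only [sub_eq_zero] at h
      rw [h]; exact hqN n
    have hNcone : ∀ (c : ℝ), 0 ≤ c → ∀ u' ∈ N, c • u' ∈ N := by
      intro c hc u' hu' y hy
      rw [real_inner_smul_left]
      have := hu' y hy
      nlinarith
    have hqperp : ∀ n, (inner ℝ (ws n) (q n) : ℝ) = 0 := by
      intro n
      have h1 := hqvar n 0 h0N
      have h2 := hqvar n ((2:ℝ) • q n) (hNcone 2 (by norm_num) _ (hqN n))
      rw [zero_sub, inner_neg_right] at h1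
      have e2 : (2:ℝ) • q n - q n = q n := by module
      rw [e2] at h2
      have : (0:ℝ) ≤ (inner ℝ (ws n) (q n) : ℝ) := by rw [hwsdef]; linarith
      rw [hwsdef]; linarith [h2]
    have hwN : ∀ n, ∀ n' ∈ N, (inner ℝ (ws n) n' : ℝ) ≤ 0 := by
      intro n n' hn'
      have h1 := hqvar n n' hn'
      have e : (inner ℝ (ws n) n' : ℝ) = inner ℝ (u n - q n) (n' - q n) + inner ℝ (ws n) (q n) := by
        rw [hwsdef, inner_sub_right]
        ring
      rw [e, hqperp n]
      linarith
    have hwS2 : ∀ n, ws n ∈ S := fun n => S.sub_mem (huS n) (hNS (hqN n))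
    set wh : ℕ → EuclideanSpace ℝ (Fin m) := fun n => ‖ws n‖⁻¹ • ws n with hwhdef
    have hwh_unit : ∀ n, ‖wh n‖ = 1 := by
      intro n
      rw [hwhdef]
      simp only [norm_smul, norm_inv, norm_norm]
      rw [inv_mul_cancel₀ (norm_ne_zero_iff.2 (hwne n))]
    have hsphere : ∀ n, wh n ∈ sphere (0 : EuclideanSpace ℝ (Fin m)) 1 := fun n =>
      mem_sphere_zero_iff_norm.2 (hwh_unit n)
    obtain ⟨w, hwmem, φ, hφmono, hφtend⟩ :=
      (isCompact_sphere (0 : EuclideanSpace ℝ (Fin m)) 1).tendsto_subseq hsphere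
    have hwnorm : ‖w‖ = 1 := mem_sphere_zero_iff_norm.1 hwmem
    have hwS' : w ∈ S :=
      S.closed_of_finiteDimensional.mem_of_tendsto hφtend
        (Eventually.of_forall fun k =>
          S.smul_mem _ (hwS2 (φ k)) : ∀ᶠ k in atTop, (wh ∘ φ) k ∈ (S : Set (EuclideanSpace ℝ (Fin m))))
    have hwhS : ∀ n, ∀ n' ∈ N, (inner ℝ (wh n) n' : ℝ) ≤ 0 := by
      intro n n' hn'
      rw [hwhdef, real_inner_smul_left]
      have := hwN n n' hn'
      have hinv : (0:ℝ) ≤ ‖ws n‖⁻¹ := by positivity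
      nlinarith
    have hwN' : ∀ n' ∈ N, (inner ℝ w n' : ℝ) ≤ 0 := by
      intro n' hn'
      have hlim : Tendsto (fun k => (inner ℝ (wh (φ k)) n' : ℝ)) atTop (𝓝 (inner ℝ w n')) := by
        have hc : Continuous fun u' : EuclideanSpace ℝ (Fin m) => (inner ℝ u' n' : ℝ) :=
          Continuous.inner continuous_id continuous_const
        exact (hc.tendsto w).comp hφtend
      exact le_of_tendsto hlim (Eventually.of_forall fun k => hwhS (φ k) n' hn')
    have hwv0 : (inner ℝ w v : ℝ) = 0 := by
      have hle : (inner ℝ w v : ℝ) ≤ 0 := hwN' v hvN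
      have hlim : Tendsto (fun k => (inner ℝ (wh (φ k)) v : ℝ)) atTop (𝓝 (inner ℝ w v)) := by
        have hc : Continuous fun u' : EuclideanSpace ℝ (Fin m) => (inner ℝ u' v : ℝ) :=
          Continuous.inner continuous_id continuous_const
        exact (hc.tendsto w).comp hφtend
      have hlb : Tendsto (fun k : ℕ => -(1 / ((k:ℝ) + 1))) atTop (𝓝 0) := by
        have := (tendsto_one_div_add_atTop_nhds_zero_nat :
          Tendsto (fun n : ℕ => 1 / ((n : ℝ) + 1)) atTop (𝓝 0))
        have h2 := this.neg
        simpa using h2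
      have hge : (0:ℝ) ≤ inner ℝ w v := by
        refine le_of_tendsto_of_tendsto' hlb hlim fun k => ?_
        have hqp : (inner ℝ (wh (φ k)) (u (φ k)) : ℝ) ≥ 0 := by
          have e : (inner ℝ (wh (φ k)) (u (φ k)) : ℝ)
              = inner ℝ (wh (φ k)) (q (φ k)) + inner ℝ (wh (φ k)) (ws (φ k)) := by
            rw [← inner_add_right, hwsdef]
            norm_num
          have e1 : (inner ℝ (wh (φ k)) (q (φ k)) : ℝ) = 0 := by
            rw [hwhdef, real_inner_smul_left, hqperp, mul_zero]
          have e2 : (0:ℝ) ≤ inner ℝ (wh (φ k)) (ws (φ k)) := by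
            rw [hwhdef, real_inner_smul_left, real_inner_self_eq_norm_sq]
            positivity
          rw [e, e1]
          linarith
        have hcs : |(inner ℝ (wh (φ k)) (v - u (φ k)) : ℝ)| ≤ ‖v - u (φ k)‖ := by
          have := abs_real_inner_le_norm (wh (φ k)) (v - u (φ k))
          rwa [hwh_unit, one_mul] at this
        have edec : (inner ℝ (wh (φ k)) v : ℝ)
            = inner ℝ (wh (φ k)) (u (φ k)) + inner ℝ (wh (φ k)) (v - u (φ k)) := by
          rw [← inner_add_right]
          norm_num
        have hb1 : ‖v - u (φ k)‖ < 1 / ((φ k : ℝ) + 1) := by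
          have := hudist (φ k)
          rwa [norm_sub_rev] at this
        have hb2 : 1 / ((φ k : ℝ) + 1) ≤ 1 / ((k:ℝ) + 1) := by
          have hk : (k:ℝ) ≤ (φ k : ℝ) := by exact_mod_cast hφmono.le_apply
          apply one_div_le_one_div_of_le <;> linarith
        rw [edec]
        linarith [abs_le.1 hcs]
      linarith
    -- differentiability of P at x
    obtain ⟨U, hU, hCD⟩ := hd
    have hdiff : DifferentiableAt ℝ P x := (hCD.contDiffAt hU).differentiableAt one_ne_zero
    have hfd := hdiff.hasFDerivAt
    have hcnorm : Tendsto (fun n : ℕ => ‖((n:ℝ) + 1)‖) atTop atTop := by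
      have h : Tendsto (fun n : ℕ => ((n:ℝ) + 1)) atTop atTop :=
        tendsto_atTop_add_const_right _ 1 tendsto_natCast_atTop_atTop
      exact h.congr fun n => (Real.norm_of_nonneg (by positivity)).symm
    have hinv_pos : ∀ n : ℕ, (0:ℝ) < ((n:ℝ) + 1)⁻¹ := fun n => by positivity
    have hinvtend : Tendsto (fun n : ℕ => ((n:ℝ) + 1)⁻¹) atTop (𝓝 0) := by
      have := (tendsto_one_div_add_atTop_nhds_zero_nat :
        Tendsto (fun n : ℕ => 1 / ((n : ℝ) + 1)) atTop (𝓝 0))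
      simpa [one_div] using this
    -- the derivative kills directions inside the normal cone
    have hkill : ∀ n' ∈ N, fderiv ℝ P x (n' - v) = 0 := by
      intro n' hn'
      have hPz : ∀ t : ℝ, 0 < t → t ≤ 1 → P (x + t • (n' - v)) = z := by
        intro t ht ht1
        apply proj_unique hP hzC
        have e : x + t • (n' - v) - z = (1 - t) • v + t • n' := by
          rw [hvdef]; module
        rw [e]
        exact hNconvex hvN hn' (by linarith) ht.le (by ring)
      have hlim := hfd.lim (n' - v) (c := fun n : ℕ => ((n:ℝ) + 1)) hcnorm
      have heq : ∀ n : ℕ, ((n:ℝ) + 1) • (P (x + ((n:ℝ) + 1)⁻¹ • (n' - v)) - P x) = 0 := by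
        intro n
        have h1 : ((n:ℝ) + 1)⁻¹ ≤ 1 := by
          rw [inv_le_one_iff₀]
          right; push_cast; linarith [Nat.cast_nonneg (α := ℝ) n]
        rw [hPz _ (hinv_pos n) h1, ← hzdef, sub_self, smul_zero]
      have h0 : Tendsto (fun n : ℕ => ((n:ℝ) + 1) • (P (x + ((n:ℝ) + 1)⁻¹ • (n' - v)) - P x))
          atTop (𝓝 0) := by
        rw [tendsto_congr heq]
        exact tendsto_const_nhds
      exact tendsto_nhds_unique hlim h0
    -- the derivative fixes w
    have hbw : ∀ i, b i z = β i → b i w ≤ 0 := by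
      intro i hi
      rw [← hr, real_inner_comm]
      exact hwN' (r i) (hrN i hi)
    obtain ⟨t₀, ht₀, hgood⟩ : ∃ t₀ > 0, ∀ t : ℝ, 0 < t → t < t₀ → z + t • w ∈ C := by
      obtain ⟨t₀, ht₀, hsub⟩ := mem_nhdsGT_iff_exists_Ioo_subset.1 (hfeas w hbw)
      exact ⟨t₀, ht₀, fun t h1 h2 => hsub ⟨h1, h2⟩⟩
    have hPw : ∀ t : ℝ, 0 < t → t < t₀ → P (x + t • w) = z + t • w := by
      intro t h1 h2
      apply proj_unique hP (hgood t h1 h2)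
      have e : x + t • w - (z + t • w) = v := by rw [hvdef]; abel
      rw [e]
      intro y' hy'
      have e2 : y' - (z + t • w) = (y' - z) - t • w := by abel
      rw [e2, inner_sub_right, real_inner_smul_right]
      have hvw : (inner ℝ v w : ℝ) = 0 := by rw [real_inner_comm]; exact hwv0
      rw [hvw, mul_zero, sub_zero]
      exact hvN y' hy'
    have hlim2 := hfd.lim w (c := fun n : ℕ => ((n:ℝ) + 1)) hcnorm
    have heq2 : ∀ᶠ n : ℕ in atTop,
        ((n:ℝ) + 1) • (P (x + ((n:ℝ) + 1)⁻¹ • w) - P x) = w := by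
      filter_upwards [hinvtend.eventually_lt_const ht₀] with n hn
      rw [hPw _ (hinv_pos n) hn, ← hzdef, add_sub_cancel_left, smul_smul,
        mul_inv_cancel₀ (by positivity), one_smul]
    have hDfw : fderiv ℝ P x w = w :=
      tendsto_nhds_unique hlim2 (Tendsto.congr' (EventuallyEq.symm heq2) tendsto_const_nhds)
    have hkillspan : ∀ u' ∈ Submodule.span ℝ
        {d : EuclideanSpace ℝ (Fin m) | ∃ n' ∈ N, d = n' - v},
        fderiv ℝ P x u' = 0 := by
      intro u' hu'
      induction hu' using Submodule.span_induction with
      | mem d hd => obtain ⟨n', hn', rfl⟩ := hd; exact hkill n' hn'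
      | zero => exact map_zero _
      | add a1 a2 _ _ h1 h2 => rw [map_add, h1, h2, add_zero]
      | smul c a1 _ h1 => rw [map_smul, h1, smul_zero]
    have hwspan : w ∈ Submodule.span ℝ
        {d : EuclideanSpace ℝ (Fin m) | ∃ n' ∈ N, d = n' - v} := by
      have hsub : N ⊆ (Submodule.span ℝ
          {d : EuclideanSpace ℝ (Fin m) | ∃ n' ∈ N, d = n' - v} :
          Set (EuclideanSpace ℝ (Fin m))) := by
        intro n' hn'
        have h1 : n' - v ∈ Submodule.span ℝ
            {d : EuclideanSpace ℝ (Fin m) | ∃ n'' ∈ N, d = n'' - v} :=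
          Submodule.subset_span ⟨n', hn', rfl⟩
        have h2 : (0 : EuclideanSpace ℝ (Fin m)) - v ∈ Submodule.span ℝ
            {d : EuclideanSpace ℝ (Fin m) | ∃ n'' ∈ N, d = n'' - v} :=
          Submodule.subset_span ⟨0, h0N, rfl⟩
        have e : n' = (n' - v) - ((0 : EuclideanSpace ℝ (Fin m)) - v) := by abel
        rw [e]
        exact Submodule.sub_mem _ h1 h2
      have hle : S ≤ Submodule.span ℝ
          {d : EuclideanSpace ℝ (Fin m) | ∃ n' ∈ N, d = n' - v} := by
        rw [← hspan]
        exact Submodule.span_le.2 hsub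
      exact hle hwS'
    have h0' := hkillspan w hwspan
    rw [hDfw] at h0'
    rw [h0', norm_zero] at hwnorm
    norm_num at hwnorm
  · -- backward direction: relative interior ⇒ C¹
    intro hv
    obtain ⟨p, hpInt, hpv⟩ := hv
    rw [mem_interior_iff_mem_nhds, Metric.mem_nhds_iff] at hpInt
    obtain ⟨ε, hε, hball⟩ := hpInt
    have hvS : v ∈ (S : Set (EuclideanSpace ℝ (Fin m))) := hNS hvN
    have hcrit : ∀ u : EuclideanSpace ℝ (Fin m), u ∈ (S : Set (EuclideanSpace ℝ (Fin m))) →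
        ‖u - v‖ < ε → u ∈ ncone C z := by
      intro u huS hu
      have huaff : u ∈ affineSpan ℝ (ncone C z) := by
        rw [← SetLike.mem_coe, haff]; exact huS
      have hmem : (⟨u, huaff⟩ : affineSpan ℝ (ncone C z)) ∈ Metric.ball p ε := by
        rw [mem_ball, Subtype.dist_eq, hpv]
        simpa [dist_eq_norm] using hu
      exact hball hmem
    set Q := S.subtypeL.comp (S.orthogonalProjectionOnto) with hQdef
    set A : EuclideanSpace ℝ (Fin m) → EuclideanSpace ℝ (Fin m) :=
      fun y => y - Q (y - z) with hAdef
    have hQmem : ∀ w, Q w ∈ (S : Set (EuclideanSpace ℝ (Fin m))) := fun w =>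
      (S.orthogonalProjectionOnto w).2
    have hQperp : ∀ w : EuclideanSpace ℝ (Fin m), w - Q w ∈ Sᗮ := fun w =>
      S.sub_starProjection_mem_orthogonal w
    have hQv : Q v = v := Submodule.starProjection_eq_self_iff.2 hvS
    have hAx : A x = z := by
      rw [hAdef]
      simp only [← hvdef, hQv]
      rw [hvdef]; abel
    have hbact : ∀ y, ∀ i, b i z = β i → b i (A y) = β i := by
      intro y i hi
      have h1 : A y = z + ((y - z) - Q (y - z)) := by rw [hAdef]; abel
      have h2 : b i ((y - z) - Q (y - z)) = 0 := by
        rw [← hr]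
        exact Submodule.inner_right_of_mem_orthogonal (hrS i hi) (hQperp (y - z))
      rw [h1, map_add, h2, add_zero, hi]
    have hcont : Continuous A := by
      rw [hAdef]
      exact continuous_id.sub (Q.continuous.comp (continuous_id.sub continuous_const))
    have hev1 : ∀ᶠ y in 𝓝 x, A y ∈ C := by
      have h : ∀ i, ∀ᶠ y in 𝓝 x, b i (A y) ≤ β i := by
        intro i
        by_cases hi : b i z = β i
        · exact Eventually.of_forall fun y => (hbact y i hi).le
        · have hlt : b i z < β i := lt_of_le_of_ne (hact_le i) hi
          have ht : Tendsto (fun y => b i (A y)) (𝓝 x) (𝓝 (b i z)) := by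
            have hc : Continuous fun y => b i (A y) :=
              (b i).continuous_of_finiteDimensional.comp hcont
            have := hc.tendsto x
            rwa [hAx] at this
          exact (ht.eventually_lt_const hlt).mono fun y h => h.le
      filter_upwards [eventually_all.2 h] with y hy
      rw [hCdef]; exact hy
    have hev2 : ∀ᶠ y in 𝓝 x, Q (y - z) ∈ ncone C z := by
      have ht : Tendsto (fun y => Q (y - z)) (𝓝 x) (𝓝 v) := by
        have hc : Continuous fun y : EuclideanSpace ℝ (Fin m) => Q (y - z) :=
          Q.continuous.comp (continuous_id.sub continuous_const)
        have := hc.tendsto x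
        rwa [show Q (x - z) = v from by rw [← hvdef, hQv]] at this
      filter_upwards [ht.eventually (Metric.ball_mem_nhds v hε)] with y hy
      exact hcrit _ (hQmem _) (by simpa [dist_eq_norm] using hy)
    have hPA : ∀ᶠ y in 𝓝 x, P y = A y := by
      filter_upwards [hev1, hev2] with y h1 h2
      apply proj_unique hP h1
      have hyA : y - A y = Q (y - z) := by simp only [hAdef, sub_sub_cancel]
      rw [hyA]
      intro y' hy'
      have e1 : y' - A y = (y' - z) - ((y - z) - Q (y - z)) := by
        simp only [hAdef]; abel
      have hz0 : (inner ℝ (Q (y - z)) ((y - z) - Q (y - z)) : ℝ) = 0 :=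
        Submodule.inner_right_of_mem_orthogonal (hQmem (y - z)) (hQperp (y - z))
      rw [e1, inner_sub_right, hz0, sub_zero]
      exact h2 y' hy'
    obtain ⟨U, hU, hUo, hxU⟩ := _root_.eventually_nhds_iff.mp hPA
    refine ⟨U, hUo.mem_nhds hxU, ?_⟩
    have hAcd : ContDiff ℝ 1 A := by
      rw [hAdef]
      exact contDiff_id.sub (Q.contDiff.comp (contDiff_id.sub contDiff_const))
    exact hAcd.contDiffOn.congr fun y hy => hU y hy
end
end

section
/- (Sum rule for strict graphical derivatives.) Let f : ℝⁿ → ℝᵐ be continuously differentiable around x̄ and F : ℝⁿ ⇉ ℝᵐ with ȳ ∈ F(x̄). Then D_*(f+F)(x̄, f(x̄)+ȳ)(w) = ∇f(x̄)w + D_*F(x̄, ȳ)(w) for all w ∈ ℝⁿ; moreover F is strictly proto-differentiable at x̄ for ȳ if and only if f + F is strictly proto-differentiable at x̄ for f(x̄) + ȳ. -/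
open Filter Topology Set Metric

noncomputable section

section Aux
open Asymptotics

variable {E F : Type*} [NormedAddCommGroup E] [NormedSpace ℝ E]
    [NormedAddCommGroup F] [NormedSpace ℝ F]

lemma tendstoA {f : E → F} {f' : E →L[ℝ] F} {xb : E}
    (hf : HasStrictFDerivAt f f' xb) {x v : ℕ → E} {t : ℕ → ℝ} {w : E}
    (ht : ∀ n, 0 < t n) (hx : Tendsto x atTop (𝓝 xb)) (ht0 : Tendsto t atTop (𝓝 0))
    (hv : Tendsto v atTop (𝓝 w)) :
    Tendsto (fun n => (t n)⁻¹ • (f (x n + t n • v n) - f (x n))) atTop (𝓝 (f' w)) := by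
  have hb : Tendsto (fun n => x n + t n • v n) atTop (𝓝 xb) := by
    have h2 : Tendsto (fun n => t n • v n) atTop (𝓝 ((0:ℝ) • w)) := ht0.smul hv
    simpa using hx.add h2
  have hg : Tendsto (fun n => (x n + t n • v n, x n)) atTop (𝓝 (xb, xb)) :=
    hb.prodMk_nhds hx
  have h1 : (fun n => f (x n + t n • v n) - f (x n) - f' (t n • v n)) =o[atTop]
      (fun n => t n • v n) := by
    refine (hf.isLittleO.comp_tendsto hg).congr (fun n => ?_) (fun n => ?_) <;>
      simp only [Function.comp_apply, add_sub_cancel_left]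
  have h2 : (fun n => t n • v n) =O[atTop] (fun n => t n) := by
    rw [Asymptotics.isBigO_iff]
    refine ⟨‖w‖ + 1, ?_⟩
    have hle : ∀ᶠ n in atTop, ‖v n‖ ≤ ‖w‖ + 1 :=
      hv.norm.eventually_le_const (by linarith [norm_nonneg w] : ‖w‖ < ‖w‖ + 1)
    filter_upwards [hle] with n hn
    rw [norm_smul]
    calc ‖t n‖ * ‖v n‖ ≤ ‖t n‖ * (‖w‖ + 1) :=
          mul_le_mul_of_nonneg_left hn (norm_nonneg _)
      _ = (‖w‖ + 1) * ‖t n‖ := by ring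
  have h3 := (h1.trans_isBigO h2).tendsto_inv_smul_nhds_zero
  have h4 : Tendsto (fun n => f' (v n)) atTop (𝓝 (f' w)) :=
    (f'.continuous.tendsto w).comp hv
  have key : ∀ n, (t n)⁻¹ • (f (x n + t n • v n) - f (x n))
      = (t n)⁻¹ • (f (x n + t n • v n) - f (x n) - f' (t n • v n)) + f' (v n) := by
    intro n
    simp only [map_smul, smul_sub, smul_smul, inv_mul_cancel₀ (ht n).ne', one_smul]
    abel
  have h5 := h3.add h4
  rw [zero_add] at h5
  exact Tendsto.congr (fun n => (key n).symm) h5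

lemma lemP {f : E → F} {f' : E →L[ℝ] F} {xb : E} {yb : F} {Φ : E → Set F}
    (hf : HasStrictFDerivAt f f' xb) {w : E} {u : F}
    (h : (w, u) ∈ paraT {p : E × F | p.2 ∈ Φ p.1} (xb, yb)) :
    (w, u + f' w) ∈ paraT {p : E × F | p.2 - f p.1 ∈ Φ p.1} (xb, f xb + yb) := by
  obtain ⟨x, t, v, hxΩ, hx, ht, ht0, hv, hmem⟩ := h
  have hx1 : Tendsto (fun n => (x n).1) atTop (𝓝 xb) := (continuous_fst.tendsto _).comp hx
  have hx2 : Tendsto (fun n => (x n).2) atTop (𝓝 yb) := (continuous_snd.tendsto _).comp hx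
  have hv1 : Tendsto (fun n => (v n).1) atTop (𝓝 w) := (continuous_fst.tendsto _).comp hv
  have hv2 : Tendsto (fun n => (v n).2) atTop (𝓝 u) := (continuous_snd.tendsto _).comp hv
  refine ⟨fun n => ((x n).1, (x n).2 + f (x n).1), t,
    fun n => ((v n).1, (v n).2 + (t n)⁻¹ • (f ((x n).1 + t n • (v n).1) - f (x n).1)),
    fun n => by simpa using hxΩ n, ?_, ht, ht0, ?_, fun n => ?_⟩
  · have hfc : Tendsto (fun n => f (x n).1) atTop (𝓝 (f xb)) :=
      (hf.continuousAt.tendsto).comp hx1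
    have h6 := hx2.add hfc
    rw [add_comm] at h6
    exact hx1.prodMk_nhds h6
  · exact hv1.prodMk_nhds (hv2.add (tendstoA hf ht hx1 ht0 hv1))
  · have key := hmem n
    simp only [Set.mem_setOf_eq, Prod.fst_add, Prod.snd_add, Prod.smul_mk, Prod.mk_add_mk,
      Prod.smul_fst, Prod.smul_snd] at key ⊢
    have heq : (x n).2 + f (x n).1
        + t n • ((v n).2 + (t n)⁻¹ • (f ((x n).1 + t n • (v n).1) - f (x n).1))
        - f ((x n).1 + t n • (v n).1) = (x n).2 + t n • (v n).2 := by
      simp only [smul_add, smul_smul, mul_inv_cancel₀ (ht n).ne', one_smul]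
      abel
    rw [heq]
    exact key

lemma lemC {f : E → F} {f' : E →L[ℝ] F} {xb : E} {yb : F} {Φ : E → Set F}
    (hf : HasStrictFDerivAt f f' xb) {w : E} {u : F}
    (h : (w, u) ∈ clarkeT {p : E × F | p.2 ∈ Φ p.1} (xb, yb)) :
    (w, u + f' w) ∈ clarkeT {p : E × F | p.2 - f p.1 ∈ Φ p.1} (xb, f xb + yb) := by
  intro x t hxΩ hx ht ht0
  have hx1 : Tendsto (fun n => (x n).1) atTop (𝓝 xb) := (continuous_fst.tendsto _).comp hx
  have hx2' : Tendsto (fun n => (x n).2) atTop (𝓝 (f xb + yb)) := (continuous_snd.tendsto _).comp hx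
  have hx2 : Tendsto (fun n => (x n).2 - f (x n).1) atTop (𝓝 yb) := by
    have hfc : Tendsto (fun n => f (x n).1) atTop (𝓝 (f xb)) :=
      (hf.continuousAt.tendsto).comp hx1
    have h6 := hx2'.sub hfc
    simpa using h6
  obtain ⟨v, hv, hmem⟩ := h (fun n => ((x n).1, (x n).2 - f (x n).1)) t
    (fun n => hxΩ n) (hx1.prodMk_nhds hx2) ht ht0
  have hv1 : Tendsto (fun n => (v n).1) atTop (𝓝 w) := (continuous_fst.tendsto _).comp hv
  have hv2 : Tendsto (fun n => (v n).2) atTop (𝓝 u) := (continuous_snd.tendsto _).comp hv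
  refine ⟨fun n => ((v n).1, (v n).2 + (t n)⁻¹ • (f ((x n).1 + t n • (v n).1) - f (x n).1)),
    hv1.prodMk_nhds (hv2.add (tendstoA hf ht hx1 ht0 hv1)), fun n => ?_⟩
  have key := hmem n
  simp only [Set.mem_setOf_eq, Prod.fst_add, Prod.snd_add, Prod.smul_mk, Prod.mk_add_mk,
    Prod.smul_fst, Prod.smul_snd] at key ⊢
  have heq : (x n).2 + t n • ((v n).2 + (t n)⁻¹ • (f ((x n).1 + t n • (v n).1) - f (x n).1))
      - f ((x n).1 + t n • (v n).1) = (x n).2 - f (x n).1 + t n • (v n).2 := by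
    simp only [smul_add, smul_smul, mul_inv_cancel₀ (ht n).ne', one_smul]
    abel
  rw [heq]
  exact key

lemma lemP_rev {f : E → F} {f' : E →L[ℝ] F} {xb : E} {yb : F} {Φ : E → Set F}
    (hf : HasStrictFDerivAt f f' xb) {w : E} {u : F}
    (h : (w, u) ∈ paraT {p : E × F | p.2 - f p.1 ∈ Φ p.1} (xb, f xb + yb)) :
    (w, u - f' w) ∈ paraT {p : E × F | p.2 ∈ Φ p.1} (xb, yb) := by
  have h2 := lemP (Φ := fun z => {y | y - f z ∈ Φ z}) hf.neg
    (w := w) (u := u) (yb := f xb + yb) h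
  have hset : {p : E × F | p.2 - (-f) p.1 ∈ {y | y - f p.1 ∈ Φ p.1}}
      = {p : E × F | p.2 ∈ Φ p.1} := by
    ext p
    simp [sub_neg_eq_add, add_sub_cancel_right]
  have hpt : (-f) xb + (f xb + yb) = yb := by
    simp
  rw [hset, hpt] at h2
  simpa [sub_eq_add_neg] using h2

lemma lemC_rev {f : E → F} {f' : E →L[ℝ] F} {xb : E} {yb : F} {Φ : E → Set F}
    (hf : HasStrictFDerivAt f f' xb) {w : E} {u : F}
    (h : (w, u) ∈ clarkeT {p : E × F | p.2 - f p.1 ∈ Φ p.1} (xb, f xb + yb)) :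
    (w, u - f' w) ∈ clarkeT {p : E × F | p.2 ∈ Φ p.1} (xb, yb) := by
  have h2 := lemC (Φ := fun z => {y | y - f z ∈ Φ z}) hf.neg
    (w := w) (u := u) (yb := f xb + yb) h
  have hset : {p : E × F | p.2 - (-f) p.1 ∈ {y | y - f p.1 ∈ Φ p.1}}
      = {p : E × F | p.2 ∈ Φ p.1} := by
    ext p
    simp [sub_neg_eq_add, add_sub_cancel_right]
  have hpt : (-f) xb + (f xb + yb) = yb := by
    simp
  rw [hset, hpt] at h2
  simpa [sub_eq_add_neg] using h2

lemma paraT_image {f : E → F} {f' : E →L[ℝ] F} {xb : E} {yb : F} {Φ : E → Set F}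
    (hf : HasStrictFDerivAt f f' xb) :
    paraT {p : E × F | p.2 - f p.1 ∈ Φ p.1} (xb, f xb + yb)
      = (fun q : E × F => (q.1, q.2 + f' q.1)) ''
        paraT {p : E × F | p.2 ∈ Φ p.1} (xb, yb) := by
  ext ⟨w, u⟩
  constructor
  · intro h
    exact ⟨(w, u - f' w), lemP_rev hf h, by simp⟩
  · rintro ⟨⟨w0, u0⟩, hq, heq⟩
    obtain ⟨hw, hu⟩ := Prod.mk.injEq .. ▸ heq
    simp only at hw hu
    subst hw; subst hu
    exact lemP hf hq

lemma clarkeT_image {f : E → F} {f' : E →L[ℝ] F} {xb : E} {yb : F} {Φ : E → Set F}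
    (hf : HasStrictFDerivAt f f' xb) :
    clarkeT {p : E × F | p.2 - f p.1 ∈ Φ p.1} (xb, f xb + yb)
      = (fun q : E × F => (q.1, q.2 + f' q.1)) ''
        clarkeT {p : E × F | p.2 ∈ Φ p.1} (xb, yb) := by
  ext ⟨w, u⟩
  constructor
  · intro h
    exact ⟨(w, u - f' w), lemC_rev hf h, by simp⟩
  · rintro ⟨⟨w0, u0⟩, hq, heq⟩
    obtain ⟨hw, hu⟩ := Prod.mk.injEq .. ▸ heq
    simp only at hw hu
    subst hw; subst hu
    exact lemC hf hq

end Aux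

/-- sum rule for strict graphical derivatives: for `f` continuously
differentiable around `xb` and a set-valued map `Φ` with `yb ∈ Φ xb`,
`D_*(f+Φ)(xb, f xb + yb)(w) = ∇f(xb)w + D_*Φ(xb,yb)(w)` (strict graphical
derivatives given by paratingent cones to graphs), and `Φ` is strictly
proto-differentiable at `xb` for `yb` iff `f + Φ` is strictly proto-differentiable
at `xb` for `f xb + yb` (Clarke tangent cone = paratingent cone of the graph). -/

theorem stmt17 {n k : ℕ}
    (f : EuclideanSpace ℝ (Fin n) → EuclideanSpace ℝ (Fin k))
    (Φ : EuclideanSpace ℝ (Fin n) → Set (EuclideanSpace ℝ (Fin k)))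
    (xb : EuclideanSpace ℝ (Fin n)) (yb : EuclideanSpace ℝ (Fin k))
    (hf : ContDiffAt ℝ 1 f xb) (hy : yb ∈ Φ xb) :
    (∀ w : EuclideanSpace ℝ (Fin n),
      {u | (w, u) ∈ paraT {p : EuclideanSpace ℝ (Fin n) × EuclideanSpace ℝ (Fin k) |
          p.2 - f p.1 ∈ Φ p.1} (xb, f xb + yb)} =
      (fun u => fderiv ℝ f xb w + u) ''
        {u | (w, u) ∈ paraT {p : EuclideanSpace ℝ (Fin n) × EuclideanSpace ℝ (Fin k) |
          p.2 ∈ Φ p.1} (xb, yb)}) ∧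
    ((clarkeT {p : EuclideanSpace ℝ (Fin n) × EuclideanSpace ℝ (Fin k) |
          p.2 ∈ Φ p.1} (xb, yb) =
        paraT {p : EuclideanSpace ℝ (Fin n) × EuclideanSpace ℝ (Fin k) |
          p.2 ∈ Φ p.1} (xb, yb)) ↔
      (clarkeT {p : EuclideanSpace ℝ (Fin n) × EuclideanSpace ℝ (Fin k) |
          p.2 - f p.1 ∈ Φ p.1} (xb, f xb + yb) =
        paraT {p : EuclideanSpace ℝ (Fin n) × EuclideanSpace ℝ (Fin k) |
          p.2 - f p.1 ∈ Φ p.1} (xb, f xb + yb))) := by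
  
  have hf' : HasStrictFDerivAt f (fderiv ℝ f xb) xb := hf.hasStrictFDerivAt one_ne_zero
  set f' := fderiv ℝ f xb with hf'def
  constructor
  · intro w
    ext u
    simp only [Set.mem_setOf_eq, Set.mem_image]
    constructor
    · intro h
      exact ⟨u - f' w, lemP_rev hf' h, by simp⟩
    · rintro ⟨u0, hu0, rfl⟩
      have := lemP hf' hu0
      rwa [add_comm (u0 : EuclideanSpace ℝ (Fin k)) (f' w)] at this
  · have hinj : Function.Injective (fun q : (EuclideanSpace ℝ (Fin n)) × (EuclideanSpace ℝ (Fin k)) => (q.1, q.2 + f' q.1)) := by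
      rintro ⟨a1, a2⟩ ⟨b1, b2⟩ hab
      obtain ⟨h1, h2⟩ := Prod.mk.injEq .. ▸ hab
      simp only at h1 h2
      subst h1
      simp only [add_left_inj] at h2
      subst h2
      rfl
    constructor
    · intro h
      rw [paraT_image hf', clarkeT_image hf', h]
    · intro h
      rw [paraT_image hf', clarkeT_image hf'] at h
      exact hinj.image_injective h
end
end
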